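/- arXiv:2211.11834 — 7 statements merged into one kernel-verified Lean document; each statement's English description precedes it below -/
import Mathlib

section
/- Let k be a field of characteristic zero, let R be a k-algebra, let M be a simple R-module that is finite-dimensional as a k-vector space, and let N be an R-module that is finite-dimensional as a k-vector space. If tr_M(x) = tr_N(x) for every x ∈ R, then N is a simple R-module and N is isomorphic to M as an R-module. -/
set_option maxHeartbeats 1000000
set_option synthInstance.maxHeartbeats 400000

open LinearMap Module

open LinearMap Module

section PartA

variable {K V : Type*} [Field K] [AddCommGroup V] [Module K V] [FiniteDimensional K V]

private lemma trace_smul_one_add_nilpotent (μ : K) (nmap : Module.End K V)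
    (hn : IsNilpotent nmap) (i : ℕ) (hi : i ≠ 0) :
    trace K V ((nmap + μ • 1) ^ i) = μ ^ i * (finrank K V : K) := by
  have hc : Commute nmap (μ • (1 : Module.End K V)) := ((Commute.one_right nmap).smul_right μ)
  rw [hc.add_pow]
  rw [map_sum]
  rw [Finset.sum_eq_single 0]
  · simp only [pow_zero, one_mul, Nat.choose_zero_right, Nat.cast_one, mul_one, Nat.sub_zero,
      smul_pow, one_pow, map_smul, trace_one, smul_eq_mul]
  · intro j hj hj0
    have h1 : (μ • (1:Module.End K V)) ^ (i - j) = μ ^ (i-j) • 1 := by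
      rw [smul_pow, one_pow]
    have h2 : ((i.choose j : ℕ) : Module.End K V) = ((i.choose j : K)) • 1 := by
      rw [← Algebra.algebraMap_eq_smul_one, map_natCast]
    rw [h1, h2]
    have : nmap ^ j * (μ ^ (i-j) • 1) * ((i.choose j : K) • 1)
        = (μ ^ (i-j) * (i.choose j : K)) • nmap ^ j := by
      simp [mul_smul_comm, smul_smul, mul_comm]
    rw [this, map_smul]
    have : trace K V (nmap ^ j) = 0 := by
      have := LinearMap.isNilpotent_trace_of_isNilpotent (hn.pow_of_pos hj0)
      exact this.eq_zero
    rw [this, smul_zero]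
  · intro h; simp at h

theorem isNilpotent_of_trace_pow_eq_zero_of_isAlgClosed [IsAlgClosed K] [CharZero K]
    (f : Module.End K V) (h : ∀ i : ℕ, i ≠ 0 → trace K V (f ^ i) = 0) : IsNilpotent f := by
  classical
  set G := f.maxGenEigenspace with hGdef
  have hind : iSupIndep G := f.independent_maxGenEigenspace
  have hsup : ⨆ μ, G μ = ⊤ := f.iSup_maxGenEigenspace_eq_top
  have hint : DirectSum.IsInternal G :=
    DirectSum.isInternal_submodule_of_iSupIndep_of_iSup_eq_top hind hsup
  have hfin : {μ | G μ ≠ ⊥}.Finite := WellFoundedGT.finite_ne_bot_of_iSupIndep hind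
  have hmaps : ∀ (i : ℕ) μ, Set.MapsTo (f ^ i) (G μ) (G μ) := fun i μ =>
    Module.End.mapsTo_maxGenEigenspace_of_comm ((Commute.refl f).pow_right i) μ
  -- trace on each block
  have key : ∀ (i : ℕ), i ≠ 0 → ∀ μ, trace K (G μ) ((f ^ i).restrict (hmaps i μ))
      = μ ^ i * (finrank K (G μ) : K) := by
    intro i hi μ
    have hmf : ∀ x ∈ G μ, f x ∈ G μ := fun x hx => by simpa using hmaps 1 μ hx
    set g : Module.End K (G μ) := f.restrict hmf with hgdef
    have hrw : (f ^ i).restrict (hmaps i μ) = g ^ i := by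
      rw [hgdef, Module.End.pow_restrict i hmf]
    have hmt : ∀ x ∈ G μ, (f - algebraMap K (Module.End K V) μ) x ∈ G μ := fun x hx =>
      Module.End.mapsTo_maxGenEigenspace_of_comm
        (Commute.sub_right (Commute.refl f) (Algebra.commute_algebraMap_right μ f)) μ hx
    set nmap : Module.End K (G μ) := (f - algebraMap K (Module.End K V) μ).restrict hmt
      with hnmapdef
    have hnnil : IsNilpotent nmap :=
      Module.End.isNilpotent_restrict_maxGenEigenspace_sub_algebraMap f μ hmt
    have hg : g = nmap + μ • 1 := by
      ext x
      have : (f - algebraMap K (Module.End K V) μ) x.1 = f x.1 - μ • x.1 := by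
        simp [Algebra.algebraMap_eq_smul_one]
      simp only [hgdef, hnmapdef, LinearMap.restrict_apply, LinearMap.add_apply,
        LinearMap.smul_apply, Module.End.one_apply, Submodule.coe_add, SetLike.val_smul]
      rw [this]
      abel
    rw [hrw, hg, trace_smul_one_add_nilpotent μ nmap hnnil i hi]
  -- the global trace identities
  set d : K → K := fun μ => (finrank K (G μ) : K) with hddef
  have hS : ∀ i : ℕ, i ≠ 0 → ∑ μ ∈ hfin.toFinset, μ ^ i * d μ = 0 := by
    intro i hi
    have := LinearMap.trace_eq_sum_trace_restrict' hint hfin (hmaps i)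
    rw [h i hi] at this
    rw [show (∑ μ ∈ hfin.toFinset, μ ^ i * d μ)
        = ∑ μ ∈ hfin.toFinset, (trace K (G μ)) ((f ^ i).restrict (fun x hx => hmaps i μ hx)) from
      Finset.sum_congr rfl fun μ _ => (key i hi μ).symm]
    exact this.symm
  -- all eigenvalues are zero
  have hzero : ∀ μ ∈ hfin.toFinset, μ = 0 := by
    intro μ₀ hμ₀
    by_contra hμ₀ne
    set q : Polynomial K := ∏ ν ∈ hfin.toFinset.erase μ₀, (Polynomial.X - Polynomial.C ν)
      with hqdef
    have hT0 : ∑ μ ∈ hfin.toFinset, (q.eval μ * μ) * d μ = 0 := by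
      have hexp : ∀ μ : K, (q.eval μ * μ) * d μ
          = ∑ j ∈ Finset.range (q.natDegree + 1), q.coeff j * (μ ^ (j+1) * d μ) := by
        intro μ
        rw [Polynomial.eval_eq_sum_range, Finset.sum_mul, Finset.sum_mul]
        refine Finset.sum_congr rfl fun j _ => ?_
        ring
      rw [Finset.sum_congr rfl fun μ _ => hexp μ, Finset.sum_comm]
      refine Finset.sum_eq_zero fun j _ => ?_
      rw [← Finset.mul_sum, hS (j+1) (Nat.succ_ne_zero j), mul_zero]
    rw [Finset.sum_eq_single μ₀] at hT0
    · have h1 : q.eval μ₀ ≠ 0 := by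
        rw [hqdef, Polynomial.eval_prod]
        refine Finset.prod_ne_zero_iff.mpr fun ν hν => ?_
        have : ν ≠ μ₀ := (Finset.mem_erase.mp hν).1
        simp only [Polynomial.eval_sub, Polynomial.eval_X, Polynomial.eval_C]
        exact sub_ne_zero.mpr (Ne.symm this)
      have h2 : d μ₀ ≠ 0 := by
        have hne : G μ₀ ≠ ⊥ := by simpa using (Set.Finite.mem_toFinset hfin).mp hμ₀
        have : Nontrivial (G μ₀) := Submodule.nontrivial_iff_ne_bot.mpr hne
        have : 0 < finrank K (G μ₀) := finrank_pos
        exact Nat.cast_ne_zero.mpr this.ne'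
      exact (mul_ne_zero (mul_ne_zero h1 hμ₀ne) h2) hT0
    · intro μ hμ hne
      have : q.eval μ = 0 := by
        rw [hqdef, Polynomial.eval_prod]
        refine Finset.prod_eq_zero (Finset.mem_erase.mpr ⟨hne, hμ⟩) ?_
        simp
      rw [this, zero_mul, zero_mul]
    · intro hμ₀'
      exact absurd hμ₀ hμ₀'
  -- conclude: everything is in the generalized 0-eigenspace
  have hG0 : G 0 = ⊤ := by
    rw [← top_le_iff, ← hsup]
    refine iSup_le fun μ => ?_
    by_cases hμ : G μ = ⊥
    · rw [hμ]; exact bot_le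
    · have : μ = 0 := hzero μ ((Set.Finite.mem_toFinset hfin).mpr hμ)
      rw [this]
  have : f.maxGenEigenspace 0 = (f.genEigenspace 0) (finrank K V : ℕ∞) :=
    Module.End.maxGenEigenspace_eq_genEigenspace_finrank f 0
  refine ⟨finrank K V, ?_⟩
  ext x
  have hx : x ∈ (f.genEigenspace 0) ((finrank K V : ℕ) : ℕ∞) := by
    rw [← this]
    show x ∈ G 0
    rw [hG0]; trivial
  rw [Module.End.mem_genEigenspace_nat] at hx
  simpa using hx


private lemma matrix_trace_map {n : Type*} [Fintype n] {R S : Type*} [CommRing R] [CommRing S]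
    (φ : R →+* S) (A : Matrix n n R) : (A.map φ).trace = φ A.trace := by
  simp [Matrix.trace, Matrix.diag, map_sum, Matrix.map_apply]

/-- Over a field of characteristic zero, an endomorphism whose powers all have trace zero
is nilpotent. -/
theorem isNilpotent_of_trace_pow_eq_zero {k W : Type*} [Field k] [CharZero k] [AddCommGroup W]
    [Module k W] [FiniteDimensional k W] (f : Module.End k W)
    (h : ∀ i : ℕ, i ≠ 0 → trace k W (f ^ i) = 0) : IsNilpotent f := by
  classical
  set b := Module.finBasis k W
  set A := LinearMap.toMatrixAlgEquiv b f with hA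
  set K := AlgebraicClosure k
  haveI : CharZero K := charZero_of_injective_algebraMap (algebraMap k K).injective
  set φ := algebraMap k K
  set A' := A.map φ with hA'
  set g := Matrix.toLinAlgEquiv' A' with hg
  have htrA : ∀ i : ℕ, (A ^ i).trace = trace k W (f ^ i) := by
    intro i
    rw [LinearMap.trace_eq_matrix_trace k b (f ^ i)]
    congr 1
    rw [← map_pow (LinearMap.toMatrixAlgEquiv b) f i]
    rfl
  have hgnil : IsNilpotent g := by
    apply isNilpotent_of_trace_pow_eq_zero_of_isAlgClosed
    intro i hi
    rw [show g ^ i = Matrix.toLinAlgEquiv' (A' ^ i) from (map_pow (Matrix.toLinAlgEquiv') A' i).symm]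
    rw [LinearMap.trace_eq_matrix_trace K (Pi.basisFun K _)]
    have : LinearMap.toMatrix (Pi.basisFun K _) (Pi.basisFun K _) (Matrix.toLinAlgEquiv' (A' ^ i))
        = A' ^ i := by
      rw [show (LinearMap.toMatrix (Pi.basisFun K _) (Pi.basisFun K _)) = LinearMap.toMatrix' from
        LinearMap.toMatrix_eq_toMatrix' (R := K)]
      exact LinearMap.toMatrix'_toLin' _
    rw [this]
    have : A' ^ i = (A ^ i).map φ := by
      rw [hA']
      have := map_pow (RingHom.mapMatrix φ) A i
      simp only [RingHom.mapMatrix_apply] at this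
      exact this.symm
    rw [this, matrix_trace_map, htrA, h i hi, map_zero]
  obtain ⟨m, hm⟩ := hgnil
  refine ⟨m, ?_⟩
  have hA'm : A' ^ m = 0 := by
    have := map_pow (Matrix.toLinAlgEquiv' (R := K) (n := Fin (finrank k W))) A' m
    rw [← this] at hm
    exact (_root_.map_eq_zero_iff _ (AlgEquiv.injective _)).mp hm
  have hAm : A ^ m = 0 := by
    have : (A ^ m).map φ = 0 := by
      have := map_pow (RingHom.mapMatrix φ) A m
      simp only [RingHom.mapMatrix_apply] at this
      rw [this, ← hA']
      exact hA'm
    ext i j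
    have h2 := congrArg (fun B => B i j) this
    simpa [Matrix.map_apply, map_eq_zero] using h2
  have := map_pow (LinearMap.toMatrixAlgEquiv b) f m
  rw [← hA, hAm] at this
  exact (_root_.map_eq_zero_iff _ (AlgEquiv.injective (LinearMap.toMatrixAlgEquiv b))).mp this

end PartA


section PartB

universe u

variable {k : Type*} [Field k]

/-- Levitzki/Wedderburn: a finite-dimensional space of nilpotent endomorphisms closed under
composition has a common kernel vector. -/
theorem exists_common_kernel_of_nilpotent (n : ℕ) :
    ∀ (V : Type u) [AddCommGroup V] [Module k V] [FiniteDimensional k V], finrank k V = n →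
    ∀ [Nontrivial V] (p : Submodule k (Module.End k V)),
    (∀ f ∈ p, ∀ g ∈ p, f * g ∈ p) → (∀ f ∈ p, IsNilpotent f) →
    ∃ v : V, v ≠ 0 ∧ ∀ f ∈ p, f v = 0 := by
  induction n using Nat.strong_induction_on with
  | _ n IH =>
  intro V _ _ _ hrank _ p hmul hnil
  classical
  by_cases hp : ∀ f ∈ p, f = (0 : Module.End k V)
  · obtain ⟨v, hv⟩ := exists_ne (0 : V)
    exact ⟨v, hv, fun f hf => by rw [hp f hf]; rfl⟩
  push_neg at hp
  -- choose f of minimal rank among nonzero elements of p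
  set s : Set ℕ := {r | ∃ f ∈ p, f ≠ 0 ∧ finrank k (LinearMap.range f) = r} with hs
  have hsne : s.Nonempty := by
    obtain ⟨f, hf, hf0⟩ := hp
    exact ⟨finrank k (LinearMap.range f), f, hf, hf0, rfl⟩
  obtain ⟨f, hfp, hf0, hfr⟩ := Nat.sInf_mem hsne
  have hmin : ∀ g ∈ p, g ≠ 0 → finrank k (LinearMap.range f) ≤ finrank k (LinearMap.range g) := by
    intro g hg hg0
    rw [hfr]
    exact Nat.sInf_le ⟨g, hg, hg0, rfl⟩
  set W := LinearMap.range f with hW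
  have hWne : W ≠ ⊥ := by rwa [hW, Ne, LinearMap.range_eq_bot]
  -- key: no e ∈ p maps W onto W
  have hkey : ∀ e ∈ p, Submodule.map e W ≠ W := by
    intro e he hmap
    obtain ⟨m, hm⟩ := hnil e he
    have : ∀ j : ℕ, Submodule.map (e ^ j) W = W := by
      intro j
      induction j with
      | zero =>
        rw [pow_zero, Module.End.one_eq_id]
        exact Submodule.map_id W
      | succ j ih =>
        rw [pow_succ', Module.End.mul_eq_comp, Submodule.map_comp, ih, hmap]
    have h0 := this m
    rw [hm] at h0
    simp only [Submodule.map_zero] at h0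
    exact hWne h0.symm
  -- f * f = 0 and f * g * f = 0 for g ∈ p
  have hrange : ∀ e : Module.End k V, LinearMap.range (e * f) = Submodule.map e W := by
    intro e
    rw [Module.End.mul_eq_comp, LinearMap.range_comp]

  have haux : ∀ e ∈ p, e * f ≠ 0 → Submodule.map e W ≤ W → False := by
    intro e he hne hle
    have h1 : finrank k W ≤ finrank k (Submodule.map e W) := by
      rw [← hrange e]
      exact hmin (e * f) (hmul e he f hfp) hne
    exact hkey e he (Submodule.eq_of_le_of_finrank_le hle h1)
  have hff : f * f = 0 := by
    by_contra hne
    refine haux f hfp hne ?_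
    rintro x ⟨y, -, rfl⟩
    exact LinearMap.mem_range_self f y
  have hfgf : ∀ g ∈ p, f * g * f = 0 := by
    intro g hg
    by_contra hne
    have h1 : f * g * f = (f * g) * f := by ring
    refine haux (f * g) (hmul f hfp g hg) (by rwa [← h1]) ?_
    rintro x ⟨y, -, rfl⟩
    exact LinearMap.mem_range_self f (g y)
  -- the square-zero left module J
  set J : Submodule k (Module.End k V) :=
    Submodule.map (LinearMap.mulRight k f) p ⊔ Submodule.span k {f} with hJ
  have hmem : ∀ j ∈ J, ∃ g ∈ p, ∃ c : k, j = g * f + c • f := by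
    intro j hj
    rw [hJ, Submodule.mem_sup] at hj
    obtain ⟨y, hy, z, hz, rfl⟩ := hj
    obtain ⟨g, hg, rfl⟩ := Submodule.mem_map.mp hy
    obtain ⟨c, rfl⟩ := Submodule.mem_span_singleton.mp hz
    exact ⟨g, hg, c, rfl⟩
  have hJ0 : ∀ j ∈ J, ∀ j' ∈ J, j * j' = 0 := by
    intro j hj j' hj'
    obtain ⟨g, hg, c, rfl⟩ := hmem j hj
    obtain ⟨g', hg', c', rfl⟩ := hmem j' hj'
    have e1 : f * g' * f = 0 := hfgf g' hg'
    have z1 : f * (g' * f) = 0 := by rw [← mul_assoc]; exact e1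
    have z2 : (g * f) * (g' * f) = 0 := by rw [mul_assoc, z1, mul_zero]
    have z3 : (g * f) * f = 0 := by rw [mul_assoc, hff, mul_zero]
    simp [mul_add, add_mul, smul_mul_assoc, mul_smul_comm, z1, z2, z3, hff, smul_smul]
  have hfJ : f ∈ J := by
    refine Submodule.mem_sup_right (Submodule.mem_span_singleton.mpr ⟨1, one_smul _ _⟩)
  have hJleft : ∀ t ∈ p, ∀ j ∈ J, t * j ∈ J := by
    intro t ht j hj
    obtain ⟨g, hg, c, rfl⟩ := hmem j hj
    have hexp : t * (g * f + c • f) = (t * g) * f + c • (t * f) := by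
      noncomm_ring
    rw [hexp]
    refine Submodule.add_mem _ ?_ ?_
    · exact Submodule.mem_sup_left (Submodule.mem_map.mpr ⟨t * g, hmul t ht g hg, rfl⟩)
    · exact Submodule.smul_mem _ c (Submodule.mem_sup_left (Submodule.mem_map.mpr ⟨t, ht, rfl⟩))
  -- the invariant subspace
  set V₁ : Submodule k V := ⨆ j : J, LinearMap.range (j : Module.End k V) with hV₁
  have hV₁kill : ∀ j ∈ J, ∀ v ∈ V₁, j v = 0 := by
    intro j hj v hv
    have : V₁ ≤ LinearMap.ker j := by
      refine iSup_le fun j' => ?_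
      rintro x ⟨y, rfl⟩
      have : j * (j' : Module.End k V) = 0 := hJ0 j hj j' j'.2
      simp only [LinearMap.mem_ker]
      calc j ((j' : Module.End k V) y) = (j * (j' : Module.End k V)) y := rfl
        _ = 0 := by rw [this]; rfl
    exact this hv
  have hV₁ne : V₁ ≠ ⊥ := by
    intro hbot
    refine hWne ?_
    rw [hW, ← le_bot_iff, ← hbot]
    exact le_iSup (fun j : J => LinearMap.range (j : Module.End k V)) ⟨f, hfJ⟩
  have hV₁top : V₁ ≠ ⊤ := by
    intro htop
    refine hf0 ?_
    ext v
    exact hV₁kill f hfJ v (htop ▸ Submodule.mem_top)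
  have hV₁inv : ∀ t ∈ p, ∀ v ∈ V₁, t v ∈ V₁ := by
    intro t ht
    have : V₁ ≤ Submodule.comap t V₁ := by
      refine iSup_le fun j' => ?_
      rintro x ⟨y, rfl⟩
      simp only [Submodule.mem_comap]
      have h1 : t ((j' : Module.End k V) y) = (t * (j' : Module.End k V)) y := rfl
      rw [h1]
      have h2 : t * (j' : Module.End k V) ∈ J := hJleft t ht j' j'.2
      exact le_iSup (fun j : J => LinearMap.range (j : Module.End k V)) ⟨_, h2⟩
        (LinearMap.mem_range_self _ y)
    exact fun v hv => this hv
  -- restrict everything to V₁ and induct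
  haveI : Nontrivial V₁ := Submodule.nontrivial_iff_ne_bot.mpr hV₁ne
  have hlt : finrank k V₁ < n := hrank ▸ Submodule.finrank_lt hV₁top
  set φ : p → Module.End k V₁ := fun t => (t : Module.End k V).restrict (hV₁inv t t.2) with hφ
  have hφadd : ∀ t u : p, φ (t + u) = φ t + φ u := by
    intro t u; ext x; simp [hφ, LinearMap.restrict_apply]
  have hφsmul : ∀ (c : k) (t : p), φ (c • t) = c • φ t := by
    intro c t; ext x; simp [hφ, LinearMap.restrict_apply]
  have hφzero : φ 0 = 0 := by
    ext x; simp [hφ, LinearMap.restrict_apply]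
  set p₁ : Submodule k (Module.End k V₁) :=
    { carrier := Set.range φ
      add_mem' := by rintro _ _ ⟨t, rfl⟩ ⟨u, rfl⟩; exact ⟨t + u, hφadd t u⟩
      zero_mem' := ⟨0, hφzero⟩
      smul_mem' := by rintro c _ ⟨t, rfl⟩; exact ⟨c • t, hφsmul c t⟩ } with hp₁
  have hφmul : ∀ t u : p, φ t * φ u = φ (⟨(t : Module.End k V) * u, hmul t t.2 u u.2⟩ : p) := by
    intro t u
    ext x
    simp only [hφ, Module.End.mul_apply, LinearMap.restrict_apply]
  have hmul₁ : ∀ a ∈ p₁, ∀ b ∈ p₁, a * b ∈ p₁ := by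
    rintro _ ⟨t, rfl⟩ _ ⟨u, rfl⟩
    exact ⟨_, (hφmul t u).symm⟩
  have hφpow : ∀ (t : p) (m : ℕ), (φ t) ^ m = ((t : Module.End k V) ^ m).restrict
      (by
        intro x hx
        induction m with
        | zero => simpa using hx
        | succ m ih =>
          rw [pow_succ']
          exact hV₁inv t t.2 _ ih) := by
    intro t m
    rw [hφ]
    exact Module.End.pow_restrict m (hV₁inv t t.2)
  have hnil₁ : ∀ a ∈ p₁, IsNilpotent a := by
    rintro _ ⟨t, rfl⟩
    obtain ⟨m, hm⟩ := hnil t t.2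
    refine ⟨m, ?_⟩
    rw [hφpow t m]
    ext x
    simp [LinearMap.restrict_apply, hm]
  haveI : FiniteDimensional k V₁ := inferInstance
  obtain ⟨v, hv0, hvkill⟩ := IH (finrank k V₁) hlt V₁ rfl p₁ hmul₁ hnil₁
  refine ⟨(v : V), by simpa using hv0, ?_⟩
  intro t ht
  have hz := hvkill (φ ⟨t, ht⟩) ⟨⟨t, ht⟩, rfl⟩
  have h2 : ((φ ⟨t, ht⟩) v : V) = t (v : V) := by simp [hφ, LinearMap.restrict_apply]
  rw [hz] at h2
  simpa using h2.symm

end PartB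

private lemma isSemisimpleModule_of_isSimpleModule {R M : Type*} [Ring R] [AddCommGroup M]
    [Module R M] [IsSimpleModule R M] : IsSemisimpleModule R M := by
  constructor

/-- The trace of the action of `x : R` on an `R`-module `M`, as a `k`-linear endomorphism. -/
noncomputable def traceOfSMul (k : Type*) {R M : Type*} [Field k] [Ring R] [Algebra k R]
    [AddCommGroup M] [Module k M] [Module R M] [IsScalarTower k R M] (x : R) : k :=
  LinearMap.trace k M (DistribMulAction.toLinearMap k M x)

/-- If `M` is a simple `R`-module, finite-dimensional over a characteristic-zero
field `k`, and `N` is a finite-dimensional `R`-module with the same trace function, then `N` is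
simple and isomorphic to `M`. -/
theorem simple_of_trace_eq (k R M N : Type*) [Field k] [CharZero k] [Ring R] [Algebra k R]
    [AddCommGroup M] [Module k M] [Module R M] [IsScalarTower k R M] [FiniteDimensional k M]
    [AddCommGroup N] [Module k N] [Module R N] [IsScalarTower k R N] [FiniteDimensional k N]
    [IsSimpleModule R M]
    (h : ∀ x : R, traceOfSMul k (M := M) x = traceOfSMul k (M := N) x) :
    IsSimpleModule R N ∧ Nonempty (M ≃ₗ[R] N) := by
  classical
  haveI : Nontrivial M := IsSimpleModule.nontrivial R M
  -- step 1 : the dimensions agree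
  have hdim : finrank k M = finrank k N := by
    have h1 := h 1
    have e1 : DistribMulAction.toLinearMap k M (1 : R) = (1 : Module.End k M) := by
      ext m; exact one_smul R m
    have e2 : DistribMulAction.toLinearMap k N (1 : R) = (1 : Module.End k N) := by
      ext n; exact one_smul R n
    rw [traceOfSMul, traceOfSMul, e1, e2, trace_one, trace_one] at h1
    exact_mod_cast h1
  haveI : Nontrivial N := by
    have : 0 < finrank k N := hdim ▸ finrank_pos
    exact (finrank_pos_iff (R := k)).mp this
  -- step 2 : the annihilator of M, as a k-subspace of R
  set aSet : Submodule k R :=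
    { carrier := {x : R | ∀ m : M, x • m = 0}
      add_mem' := fun {x y} hx hy m => by rw [add_smul, hx m, hy m, add_zero]
      zero_mem' := fun m => zero_smul R m
      smul_mem' := fun c x hx m => by rw [smul_assoc, hx m, smul_zero] } with haSet
  have haMul : ∀ x : R, ∀ y ∈ aSet, x * y ∈ aSet := by
    intro x y hy m
    rw [mul_smul, hy m, smul_zero]
  have haPow : ∀ x ∈ aSet, ∀ i : ℕ, i ≠ 0 → x ^ i ∈ aSet := by
    intro x hx i hi
    induction i with
    | zero => exact absurd rfl hi
    | succ i ih =>
      rcases Nat.eq_zero_or_pos i with h0 | hpos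
      · subst h0; simpa using hx
      · rw [pow_succ]
        exact fun m => by rw [mul_smul, hx m, smul_zero]
  -- the action map
  set A : R →ₗ[k] Module.End k N :=
    { toFun := fun x => DistribMulAction.toLinearMap k N x
      map_add' := fun x y => by ext n; exact add_smul x y n
      map_smul' := fun c x => by ext n; exact smul_assoc c x n } with hA
  have hApow : ∀ (x : R) (i : ℕ), i ≠ 0 → (A x) ^ i = A (x ^ i) := by
    intro x i hi
    induction i with
    | zero => exact absurd rfl hi
    | succ i ih =>
      rcases Nat.eq_zero_or_pos i with h0 | hpos
      · subst h0; simp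
      · rw [pow_succ, ih hpos.ne', pow_succ]
        ext n
        exact (mul_smul (x ^ i) x n).symm
  set p : Submodule k (Module.End k N) := aSet.map A with hp
  have hpmul : ∀ f ∈ p, ∀ g ∈ p, f * g ∈ p := by
    rintro _ ⟨x, hx, rfl⟩ _ ⟨y, hy, rfl⟩
    refine ⟨x * y, haMul x y hy, ?_⟩
    ext n
    exact mul_smul x y n
  have hpnil : ∀ f ∈ p, IsNilpotent f := by
    rintro _ ⟨x, hx, rfl⟩
    apply isNilpotent_of_trace_pow_eq_zero
    intro i hi
    rw [hApow x i hi]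
    have hM0 : DistribMulAction.toLinearMap k M (x ^ i) = 0 := by
      ext m
      exact haPow x hx i hi m
    have := (h (x ^ i)).symm
    rw [traceOfSMul, traceOfSMul, hM0, map_zero] at this
    exact this
  -- step 3 : common kernel vector
  obtain ⟨n₀, hn₀, hkill⟩ := exists_common_kernel_of_nilpotent (k := k) (finrank k N) N rfl p
    hpmul hpnil
  have hkill' : ∀ x ∈ aSet, x • n₀ = 0 := fun x hx => hkill (A x) ⟨x, hx, rfl⟩
  -- step 4 : build a nonzero R-linear map M → N
  set d := finrank k M with hd
  set bM : Basis (Fin d) k M := Module.finBasis k M with hbM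
  haveI : SMulCommClass k R M := ⟨fun c r m => (smul_comm r c m).symm⟩
  set ι : R →ₗ[R] (Fin d → M) :=
    { toFun := fun r => fun i => r • bM i
      map_add' := fun r r' => by ext i; exact add_smul r r' (bM i)
      map_smul' := fun r r' => by ext i; exact mul_smul r r' (bM i) } with hι
  set ψ : R →ₗ[R] N := LinearMap.toSpanSingleton R N n₀ with hψ
  have hkerι : ∀ r : R, ι r = 0 → r ∈ aSet := by
    intro r hr m
    have hb : ∀ i, r • bM i = 0 := fun i => congrFun hr i
    have := bM.sum_repr m
    rw [← this, Finset.smul_sum]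
    refine Finset.sum_eq_zero fun i _ => ?_
    rw [smul_comm, hb i, smul_zero]
  have hker : LinearMap.ker ι ≤ LinearMap.ker ψ := by
    intro r hr
    simp only [LinearMap.mem_ker] at hr ⊢
    rw [hψ]
    exact (LinearMap.toSpanSingleton_apply R N n₀ r).trans (hkill' r (hkerι r hr))
  haveI : IsSemisimpleModule R M := isSemisimpleModule_of_isSimpleModule
  haveI : IsSemisimpleModule R (Fin d → M) := by
    refine isSemisimpleModule_of_isSemisimpleModule_submodule'
      (p := fun i : Fin d => LinearMap.range (LinearMap.single R (fun _ : Fin d => M) i)) ?_ ?_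
    · intro i
      have hsinj : Function.Injective (LinearMap.single R (fun _ : Fin d => M) i) :=
        fun m m' hmm => by simpa using congrFun hmm i
      have e : M ≃ₗ[R] LinearMap.range (LinearMap.single R (fun _ : Fin d => M) i) :=
        LinearEquiv.ofInjective _ hsinj
      exact IsSemisimpleModule.congr e.symm
    · rw [eq_top_iff]
      intro y _
      rw [← Finset.univ_sum_single y]
      exact Submodule.sum_mem _ fun i _ =>
        Submodule.mem_iSup_of_mem i (LinearMap.mem_range_self _ (y i))
  obtain ⟨q, hq⟩ := exists_isCompl (LinearMap.range ι)
  set π : (Fin d → M) →ₗ[R] LinearMap.range ι := Submodule.linearProjOfIsCompl _ q hq with hπ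
  set e1 : (R ⧸ LinearMap.ker ι) ≃ₗ[R] LinearMap.range ι := LinearMap.quotKerEquivRange ι
  set φ0 : (R ⧸ LinearMap.ker ι) →ₗ[R] N := Submodule.liftQ (LinearMap.ker ι) ψ hker with hφ0
  set χ : (Fin d → M) →ₗ[R] N := φ0 ∘ₗ (e1.symm : LinearMap.range ι →ₗ[R] _) ∘ₗ π with hχ
  have hχ1 : χ (ι 1) = n₀ := by
    have hmem : ι 1 ∈ LinearMap.range ι := LinearMap.mem_range_self ι 1
    have hπ1 : π (ι 1) = ⟨ι 1, hmem⟩ := Submodule.linearProjOfIsCompl_apply_left hq ⟨ι 1, hmem⟩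
    have he1 : e1 (Submodule.Quotient.mk 1) = ⟨ι 1, hmem⟩ := by
      apply Subtype.ext
      simp [e1, LinearMap.quotKerEquivRange_apply_mk]
    have he1' : e1.symm ⟨ι 1, hmem⟩ = Submodule.Quotient.mk 1 := by
      rw [← he1, LinearEquiv.symm_apply_apply]
    rw [hχ]
    simp only [LinearMap.comp_apply, LinearEquiv.coe_coe]
    rw [hπ1, he1', hφ0, Submodule.liftQ_apply, hψ, LinearMap.toSpanSingleton_apply, one_smul]
  obtain ⟨i0, hi0⟩ : ∃ i : Fin d, χ ∘ₗ LinearMap.single R (fun _ : Fin d => M) i ≠ 0 := by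
    by_contra hall
    push_neg at hall
    refine hn₀ ?_
    have hsum : (∑ i : Fin d, (LinearMap.single R (fun _ : Fin d => M) i) ((ι 1) i)) = ι 1 :=
      Finset.univ_sum_single (ι 1)
    rw [← hχ1, ← hsum, map_sum]
    refine Finset.sum_eq_zero fun i _ => ?_
    simpa using DFunLike.congr_fun (hall i) ((ι 1) i)
  set φ : M →ₗ[R] N := χ ∘ₗ LinearMap.single R (fun _ : Fin d => M) i0 with hφdef
  have hinj : Function.Injective φ := by
    have := eq_bot_or_eq_top (LinearMap.ker φ)
    rcases this with hbot | htop
    · exact LinearMap.ker_eq_bot.mp hbot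
    · exact absurd (LinearMap.ker_eq_top.mp htop) hi0
  have hsurj : Function.Surjective φ := by
    have hinjk : Function.Injective (φ.restrictScalars k) := hinj
    exact (LinearMap.injective_iff_surjective_of_finrank_eq_finrank hdim).mp hinjk
  set e : M ≃ₗ[R] N := LinearEquiv.ofBijective φ ⟨hinj, hsurj⟩
  exact ⟨IsSimpleModule.congr e.symm, ⟨e⟩⟩
end

section
/- Let k be a field of characteristic zero, let R be a k-algebra, and let M and N be semisimple R-modules that are finite-dimensional as k-vector spaces. If tr_M(x) = tr_N(x) for every x ∈ R, then M and N are isomorphic as R-modules. -/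
section Aux

set_option linter.unusedSectionVars false

open LinearMap Submodule Module

variable {R : Type*} [Ring R]
variable {V : Type*} [AddCommGroup V] [Module R V]

/-- A simple submodule contained in a sup of simple submodules is isomorphic to one of them. -/
lemma simple_le_sSup_iso {fam : Set (Submodule R V)} (hfam : ∀ W ∈ fam, IsSimpleModule R W)
    [IsSemisimpleModule R V] {T : Submodule R V} (hTs : IsSimpleModule R T)
    (hT : T ≤ sSup fam) : ∃ W ∈ fam, Nonempty (W ≃ₗ[R] T) := by
  obtain ⟨q, hq⟩ := exists_isCompl T
  set p : V →ₗ[R] T := T.linearProjOfIsCompl q hq with hp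
  have hne : ∃ W ∈ fam, p ∘ₗ W.subtype ≠ 0 := by
    by_contra hc
    push_neg at hc
    have hker : sSup fam ≤ LinearMap.ker p := by
      refine sSup_le fun W hW => fun x hx => ?_
      have := congrArg (fun f => f ⟨x, hx⟩) (hc W hW)
      simpa using this
    have : Nontrivial T := hTs.nontrivial
    obtain ⟨t, ht⟩ := exists_ne (0 : T)
    have h1 : p ↑t = t := Submodule.linearProjOfIsCompl_apply_left hq t
    have h2 : p ↑t = 0 := by
      have : (t : V) ∈ LinearMap.ker p := hker (hT t.2)
      simpa using this
    exact ht (by rw [← h1, h2])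
  obtain ⟨W, hW, hne⟩ := hne
  have : IsSimpleModule R W := hfam W hW
  exact ⟨W, hW, ⟨LinearEquiv.ofBijective _ (LinearMap.bijective_of_ne_zero hne)⟩⟩

lemma map_sSup_simples_le {fam : Set (Submodule R V)} (hfam : ∀ W ∈ fam, IsSimpleModule R W)
    (hclosed : ∀ W ∈ fam, ∀ W' : Submodule R V, IsSimpleModule R W' →
      Nonempty (W' ≃ₗ[R] W) → W' ∈ fam) (g : V →ₗ[R] V) :
    Submodule.map g (sSup fam) ≤ sSup fam := by
  rw [(Submodule.gc_map_comap g).l_sSup]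
  refine iSup₂_le fun W hW => ?_
  have hWs : IsSimpleModule R W := hfam W hW
  rcases LinearMap.injective_or_eq_zero (g ∘ₗ W.subtype) with hinj | hzero
  · have hr : LinearMap.range (g ∘ₗ W.subtype) = Submodule.map g W := by
      rw [LinearMap.range_comp, Submodule.range_subtype]
    have e : W ≃ₗ[R] Submodule.map g W := hr ▸ LinearEquiv.ofInjective _ hinj
    have : IsSimpleModule R (Submodule.map g W) := IsSimpleModule.congr e.symm
    exact le_sSup (hclosed W hW _ this ⟨e.symm⟩)
  · have : Submodule.map g W = ⊥ := by
      rw [← Submodule.range_subtype W, ← LinearMap.range_comp, hzero, LinearMap.range_zero]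
    simp [this]


lemma exists_isotypic_proj [IsSemisimpleModule R V] (S : Type*) [AddCommGroup S] [Module R S] :
    ∃ (VS : Submodule R V) (π : V →ₗ[R] V),
      (∀ g : Module.End R V, π ∘ₗ g = g ∘ₗ π) ∧
      (∀ x ∈ VS, π x = x) ∧
      (∀ v : V, π v ∈ VS) ∧
      (∀ W : Submodule R V, IsSimpleModule R W → Nonempty (W ≃ₗ[R] S) → W ≤ VS) ∧
      (∀ T : Submodule R V, IsSimpleModule R T → T ≤ VS → Nonempty (T ≃ₗ[R] S)) := by
  classical
  set famA : Set (Submodule R V) :=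
    {W | IsSimpleModule R W ∧ Nonempty (W ≃ₗ[R] S)} with hfamA
  set famB : Set (Submodule R V) :=
    {W | IsSimpleModule R W ∧ ¬ Nonempty (W ≃ₗ[R] S)} with hfamB
  have hA : ∀ W ∈ famA, IsSimpleModule R W := fun W hW => hW.1
  have hB : ∀ W ∈ famB, IsSimpleModule R W := fun W hW => hW.1
  have hAc : ∀ W ∈ famA, ∀ W' : Submodule R V, IsSimpleModule R W' →
      Nonempty (W' ≃ₗ[R] W) → W' ∈ famA := by
    rintro W ⟨hWs, ⟨e⟩⟩ W' hW's ⟨e'⟩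
    exact ⟨hW's, ⟨e'.trans e⟩⟩
  have hBc : ∀ W ∈ famB, ∀ W' : Submodule R V, IsSimpleModule R W' →
      Nonempty (W' ≃ₗ[R] W) → W' ∈ famB := by
    rintro W ⟨hWs, hWn⟩ W' hW's ⟨e'⟩
    exact ⟨hW's, fun ⟨e⟩ => hWn ⟨e'.symm.trans e⟩⟩
  set VS := sSup famA with hVS
  set C := sSup famB with hC
  -- every simple submodule of VS is iso to S
  have keyA : ∀ T : Submodule R V, IsSimpleModule R T → T ≤ VS → Nonempty (T ≃ₗ[R] S) := by
    intro T hTs hT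
    obtain ⟨W, hW, ⟨e⟩⟩ := simple_le_sSup_iso hA hTs hT
    obtain ⟨eS⟩ := hW.2
    exact ⟨e.symm.trans eS⟩
  have keyB : ∀ T : Submodule R V, IsSimpleModule R T → T ≤ C → ¬ Nonempty (T ≃ₗ[R] S) := by
    intro T hTs hT ⟨eS⟩
    obtain ⟨W, hW, ⟨e⟩⟩ := simple_le_sSup_iso hB hTs hT
    exact hW.2 ⟨e.trans eS⟩
  have hcodis : VS ⊔ C = ⊤ := by
    have : famA ∪ famB = {W : Submodule R V | IsSimpleModule R W} := by
      ext W
      simp only [hfamA, hfamB, Set.mem_union, Set.mem_setOf_eq]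
      tauto
    rw [hVS, hC, ← sSup_union, this, IsSemisimpleModule.sSup_simples_eq_top]
  have hdis : VS ⊓ C = ⊥ := by
    by_contra hne
    have : Nontrivial ↥(VS ⊓ C) := Submodule.nontrivial_iff_ne_bot.2 hne
    obtain ⟨m, hm⟩ := IsSemisimpleModule.exists_simple_submodule (R := R) (M := ↥(VS ⊓ C))
    set T := Submodule.map (VS ⊓ C).subtype m with hT
    have e : m ≃ₗ[R] T := Submodule.equivMapOfInjective _ (Submodule.injective_subtype _) m
    have hTs : IsSimpleModule R T := IsSimpleModule.congr e.symm
    have hTle : T ≤ VS ⊓ C := by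
      rw [hT]
      exact (Submodule.map_subtype_le _ _)
    exact keyB T hTs (hTle.trans inf_le_right) (keyA T hTs (hTle.trans inf_le_left))
  have hcompl : IsCompl VS C := ⟨disjoint_iff.2 hdis, codisjoint_iff.2 hcodis⟩
  set π : V →ₗ[R] V := VS.subtype ∘ₗ (VS.linearProjOfIsCompl C hcompl) with hπ
  have hfix : ∀ x ∈ VS, π x = x := fun x hx => by
    exact congrArg ((↑) : VS → V)
      (Submodule.linearProjOfIsCompl_apply_left hcompl ⟨x, hx⟩)
  have hkill : ∀ x ∈ C, π x = 0 := fun x hx => by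
    simp [hπ, show VS.linearProjOfIsCompl C hcompl x = 0 from
      Submodule.linearProjOfIsCompl_apply_right' hcompl hx]
  have hrange : ∀ v : V, π v ∈ VS := fun v =>
    Submodule.coe_mem (VS.linearProjOfIsCompl C hcompl v)
  have hcomm : ∀ g : Module.End R V, π ∘ₗ g = g ∘ₗ π := by
    intro g
    ext v
    obtain ⟨⟨a, b⟩, ⟨rfl, -, -⟩, -⟩ :=
      Submodule.existsUnique_add_of_isCompl_prod hcompl v
    have hga : g ↑a ∈ VS := map_sSup_simples_le hA hAc g ⟨a, a.2, rfl⟩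
    have hgb : g ↑b ∈ C := map_sSup_simples_le hB hBc g ⟨b, b.2, rfl⟩
    simp only [LinearMap.comp_apply, map_add]
    rw [hfix _ a.2, hkill _ b.2, hfix _ hga, hkill _ hgb]
    simp
  exact ⟨VS, π, hcomm, hfix, hrange, fun W hWs hWe => le_sSup ⟨hWs, hWe⟩, keyA⟩

section Density

variable [IsSemisimpleModule R V]

lemma density_one (π : V →ₗ[R] V) (hπ : ∀ g : Module.End R V, π ∘ₗ g = g ∘ₗ π) (v : V) :
    ∃ r : R, π v = r • v := by
  obtain ⟨q, hq⟩ := exists_isCompl (Submodule.span R {v})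
  set p : Module.End R V :=
    (Submodule.span R {v}).subtype ∘ₗ
      (Submodule.span R {v}).linearProjOfIsCompl q hq with hp
  have hv : p v = v := by
    have := Submodule.linearProjOfIsCompl_apply_left hq
      ⟨v, Submodule.mem_span_singleton_self v⟩
    exact congrArg ((↑) : Submodule.span R {v} → V) this
  have : π v = p (π v) := by
    have := congrArg (fun f => f v) (hπ p)
    simp only [LinearMap.comp_apply] at this
    rw [← this, hv]
  have hmem : π v ∈ Submodule.span R {v} := by
    rw [this, hp]
    exact Submodule.coe_mem _
  obtain ⟨r, hr⟩ := Submodule.mem_span_singleton.1 hmem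
  exact ⟨r, hr.symm⟩

instance pi_semisimple (n : ℕ) : IsSemisimpleModule R (Fin n → V) := by
  refine isSemisimpleModule_of_isSemisimpleModule_submodule'
    (p := fun i : Fin n => LinearMap.range (LinearMap.single R (fun _ : Fin n => V) i))
    (fun i => IsSemisimpleModule.range _) ?_
  simp_rw [LinearMap.range_eq_map, Submodule.iSup_map_single, Submodule.pi_top]

lemma density_fin (π : V →ₗ[R] V) (hπ : ∀ g : Module.End R V, π ∘ₗ g = g ∘ₗ π)
    (n : ℕ) (vs : Fin n → V) : ∃ r : R, ∀ i, π (vs i) = r • vs i := by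
  classical
  set Pn : Module.End R (Fin n → V) :=
    LinearMap.pi (fun i => π ∘ₗ LinearMap.proj i) with hPn
  have hPnc : ∀ G : Module.End R (Fin n → V), Pn ∘ₗ G = G ∘ₗ Pn := by
    intro G
    refine LinearMap.ext fun w => funext fun i => ?_
    have hw : w = ∑ j, Pi.single j (w j) := by
      simp [Finset.univ_sum_single]
    calc (Pn (G w)) i = π ((G w) i) := rfl
      _ = (G (Pn w)) i := by
        conv_lhs => rw [hw]
        conv_rhs => rw [hw]
        rw [map_sum, map_sum, map_sum]
        simp only [Finset.sum_apply, map_sum]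
        refine Finset.sum_congr rfl fun j _ => ?_
        have hg : ∀ x : V, π ((G (Pi.single j x)) i) = (G (Pi.single j (π x))) i := by
          intro x
          have := congrArg (fun f => f x)
            (hπ ((LinearMap.proj i) ∘ₗ G ∘ₗ (LinearMap.single R (fun _ : Fin n => V) j)))
          simpa [LinearMap.comp_apply] using this
        have : (Pn (Pi.single j (w j))) = Pi.single j (π (w j)) := by
          ext i'
          simp only [hPn, LinearMap.pi_apply, LinearMap.comp_apply, LinearMap.proj_apply]
          by_cases hij : i' = j
          · subst hij; simp
          · simp [Pi.single_eq_of_ne hij]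
        rw [this]
        exact hg (w j)
  obtain ⟨r, hr⟩ := density_one Pn hPnc vs
  exact ⟨r, fun i => by
    have := congrArg (fun w => w i) hr
    simpa [hPn] using this⟩

end Density

section Traces

variable (k : Type*) [Field k] [Algebra k R]
variable {M N : Type*} [AddCommGroup M] [Module k M] [Module R M] [IsScalarTower k R M]
  [AddCommGroup N] [Module k N] [Module R N] [IsScalarTower k R N]
  [FiniteDimensional k M] [FiniteDimensional k N]

lemma traceOfSMul_congr (e : M ≃ₗ[R] N) (x : R) :
    traceOfSMul k (M := M) (R := R) x = traceOfSMul k (M := N) (R := R) x := by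
  unfold traceOfSMul
  rw [← LinearMap.trace_conj' (DistribMulAction.toLinearMap k M x) (e.restrictScalars k)]
  congr 1
  ext n
  simp [LinearEquiv.conj_apply, map_smul, DistribMulAction.toLinearMap]

lemma traceOfSMul_prod (x : R) :
    traceOfSMul k (M := M × N) (R := R) x
      = traceOfSMul k (M := M) (R := R) x + traceOfSMul k (M := N) (R := R) x := by
  unfold traceOfSMul
  rw [← LinearMap.trace_prodMap']
  congr 1

end Traces

lemma prod_isSemisimple (M N : Type*) [AddCommGroup M] [Module R M] [AddCommGroup N] [Module R N]
    [IsSemisimpleModule R M] [IsSemisimpleModule R N] : IsSemisimpleModule R (M × N) := by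
  refine isSemisimpleModule_of_isSemisimpleModule_submodule'
    (p := fun b : Bool => if b then LinearMap.range (LinearMap.inl R M N)
      else LinearMap.range (LinearMap.inr R M N)) (fun b => ?_) ?_
  · cases b <;> exact IsSemisimpleModule.range _
  · rw [iSup_bool_eq]
    exact LinearMap.sup_range_inl_inr

section Peel

variable (k : Type*) [Field k] [CharZero k] [Algebra k R]
variable {M N : Type*} [AddCommGroup M] [Module k M] [Module R M] [IsScalarTower k R M]
  [FiniteDimensional k M] [IsSemisimpleModule R M]
  [AddCommGroup N] [Module k N] [Module R N] [IsScalarTower k R N]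
  [FiniteDimensional k N] [IsSemisimpleModule R N]

set_option maxHeartbeats 1000000 in
set_option synthInstance.maxHeartbeats 400000 in
lemma peel (h : ∀ x : R, traceOfSMul k (M := M) (R := R) x = traceOfSMul k (M := N) (R := R) x)
    (S : Submodule R M) (hS : IsSimpleModule R S) :
    ∃ T : Submodule R N, IsSimpleModule R T ∧ Nonempty (T ≃ₗ[R] S) := by
  classical
  haveI : IsSemisimpleModule R (M × N) := prod_isSemisimple M N
  obtain ⟨VS, π, hcomm, hfix, hrangeVS, hle, hiso⟩ :=
    exists_isotypic_proj (R := R) (V := M × N) (↥S)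
  -- realize π by a ring element via density on a basis
  set b := Module.finBasis k (M × N) with hb
  obtain ⟨r, hr⟩ := density_fin π hcomm _ b
  have hract : ∀ v : M × N, π v = r • v := by
    have h1 : (π.restrictScalars k : (M × N) →ₗ[k] (M × N))
        = DistribMulAction.toLinearMap k (M × N) r := by
      apply b.ext
      intro i
      simpa [DistribMulAction.toLinearMap] using hr i
    intro v
    simpa [DistribMulAction.toLinearMap] using congrArg (fun f => f v) h1
  have hidem : ∀ v : M × N, π (π v) = π v := fun v => hfix _ (hrangeVS v)
  -- the action of r on M and N
  set fM : M →ₗ[k] M := DistribMulAction.toLinearMap k M r with hfM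
  set fN : N →ₗ[k] N := DistribMulAction.toLinearMap k N r with hfN
  have hπM : ∀ m : M, π (m, 0) = (fM m, 0) := by
    intro m
    rw [hract]
    simp [hfM, Prod.smul_mk, DistribMulAction.toLinearMap]
  have hπN : ∀ n : N, π (0, n) = (0, fN n) := by
    intro n
    rw [hract]
    simp [hfN, Prod.smul_mk, DistribMulAction.toLinearMap]
  have hfMidem : ∀ m, fM (fM m) = fM m := by
    intro m
    have h2 : π (π (m, 0)) = (fM (fM m), 0) := by rw [hπM m, hπM (fM m)]
    have h3 : π (π ((m : M), (0 : N))) = (fM m, 0) := by rw [hidem, hπM]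
    exact congrArg Prod.fst (h2.symm.trans h3)
  have hfNidem : ∀ n, fN (fN n) = fN n := by
    intro n
    have h2 : π (π ((0 : M), n)) = (0, fN (fN n)) := by rw [hπN n, hπN (fN n)]
    have h3 : π (π ((0 : M), (n : N))) = (0, fN n) := by rw [hidem, hπN]
    exact congrArg Prod.snd (h2.symm.trans h3)
  -- traces are the dimensions of the ranges
  have hprojM : LinearMap.IsProj (LinearMap.range fM) fM :=
    ⟨fun m => ⟨m, rfl⟩, by rintro x ⟨y, rfl⟩; exact hfMidem y⟩
  have hprojN : LinearMap.IsProj (LinearMap.range fN) fN :=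
    ⟨fun n => ⟨n, rfl⟩, by rintro x ⟨y, rfl⟩; exact hfNidem y⟩
  have htrM : traceOfSMul k (M := M) (R := R) r
      = (Module.finrank k ↥(LinearMap.range fM) : k) := hprojM.trace
  have htrN : traceOfSMul k (M := N) (R := R) r
      = (Module.finrank k ↥(LinearMap.range fN) : k) := hprojN.trace
  have hranks : Module.finrank k ↥(LinearMap.range fM)
      = Module.finrank k ↥(LinearMap.range fN) :=
    Nat.cast_injective (htrM ▸ htrN ▸ h r)
  -- the range of fM contains S, hence is nonzero
  haveI : Nontrivial ↥S := hS.nontrivial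
  obtain ⟨s, hs⟩ := exists_ne (0 : ↥S)
  have hS0le : Submodule.map (LinearMap.inl R M N) S ≤ VS := by
    refine hle _ ?_ ?_
    · exact IsSimpleModule.congr
        (Submodule.equivMapOfInjective _ LinearMap.inl_injective S).symm
    · exact ⟨(Submodule.equivMapOfInjective _ LinearMap.inl_injective S).symm⟩
  have hfMs : fM ↑s = ↑s := by
    have hmem : ((s : M), (0 : N)) ∈ Submodule.map (LinearMap.inl R M N) S :=
      ⟨s, s.2, rfl⟩
    have := hfix _ (hS0le hmem)
    rw [hπM] at this
    exact congrArg Prod.fst this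
  have hMrank : 0 < Module.finrank k ↥(LinearMap.range fM) := by
    have : Nontrivial ↥(LinearMap.range fM) := by
      refine ⟨⟨⟨fM ↑s, ⟨_, rfl⟩⟩, 0, fun hc => hs ?_⟩⟩
      have h0 : fM ↑s = 0 := congrArg Subtype.val hc
      rw [hfMs] at h0
      exact Subtype.ext h0
    exact Module.finrank_pos
  -- hence fN is nonzero: get a nonzero element of VS inside N
  have hNrank : 0 < Module.finrank k ↥(LinearMap.range fN) := hranks ▸ hMrank
  obtain ⟨y, n0, hy⟩ : ∃ y n0, fN n0 = y ∧ y ≠ 0 := by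
    have : Nontrivial ↥(LinearMap.range fN) := Module.nontrivial_of_finrank_pos hNrank
    obtain ⟨⟨y, n0, rfl⟩, hy⟩ := exists_ne (0 : ↥(LinearMap.range fN))
    exact ⟨fN n0, n0, rfl, fun hc => hy (Subtype.ext hc)⟩
  obtain ⟨hfn0, hy0⟩ := hy
  set P := VS ⊓ LinearMap.range (LinearMap.inr R M N) with hP
  have hPne : ((0 : M), y) ∈ P := by
    constructor
    · rw [← hfn0, ← hπN]; exact hrangeVS _
    · exact ⟨y, rfl⟩
  haveI : Nontrivial ↥P := ⟨⟨⟨((0 : M), y), hPne⟩, 0, by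
    simp only [ne_eq, Submodule.mk_eq_zero, Prod.mk_eq_zero]
    exact fun hc => hy0 hc.2⟩⟩
  obtain ⟨T0, hT0⟩ := IsSemisimpleModule.exists_simple_submodule (R := R) (M := ↥P)
  haveI := hT0
  set T := Submodule.map P.subtype T0 with hT
  have eT : T0 ≃ₗ[R] T := Submodule.equivMapOfInjective P.subtype P.injective_subtype T0
  have hTs : IsSimpleModule R T := IsSimpleModule.congr (N := ↥T0) eT.symm
  have hTle : T ≤ P := Submodule.map_subtype_le _ _
  obtain ⟨eTS⟩ := hiso T hTs (hTle.trans inf_le_left)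
  -- push T down to a submodule of N
  have hsnd_inj : Function.Injective ((LinearMap.snd R M N) ∘ₗ T.subtype) := by
    rw [← LinearMap.ker_eq_bot]
    refine (Submodule.eq_bot_iff _).2 fun x hx => ?_
    have hx2 : (LinearMap.snd R M N) ((x : T) : M × N) = 0 := hx
    obtain ⟨n, hn⟩ := (hTle (x : T).2).2
    refine Subtype.ext (Prod.ext ?_ hx2)
    have : ((x : T) : M × N).1 = 0 := by rw [← hn]; rfl
    simpa using this
  have hrange_snd : LinearMap.range ((LinearMap.snd R M N) ∘ₗ T.subtype)
      = Submodule.map (LinearMap.snd R M N) T := by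
    rw [LinearMap.range_comp, Submodule.range_subtype]
  have eT' : T ≃ₗ[R] ↥(Submodule.map (LinearMap.snd R M N) T) :=
    hrange_snd ▸ LinearEquiv.ofInjective _ hsnd_inj
  exact ⟨Submodule.map (LinearMap.snd R M N) T, IsSimpleModule.congr eT'.symm,
    ⟨eT'.symm.trans eTS⟩⟩

end Peel

section Main

variable (k : Type*) [Field k] [CharZero k] [Algebra k R]

lemma trivial_case {M N : Type*} [AddCommGroup M] [Module k M] [Module R M] [IsScalarTower k R M]
    [FiniteDimensional k M] [IsSemisimpleModule R M]
    [AddCommGroup N] [Module k N] [Module R N] [IsScalarTower k R N]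
    [FiniteDimensional k N] [IsSemisimpleModule R N]
    (h : ∀ x : R, traceOfSMul k (M := M) (R := R) x = traceOfSMul k (M := N) (R := R) x)
    (hm : Subsingleton M) : Subsingleton N := by
  by_contra hns
  haveI : Nontrivial N := not_subsingleton_iff_nontrivial.1 hns
  obtain ⟨T, hT⟩ := IsSemisimpleModule.exists_simple_submodule (R := R) (M := N)
  obtain ⟨S', hS', -⟩ := peel k (fun x => (h x).symm) T hT
  haveI := hS'.nontrivial
  exact not_subsingleton ↥S' inferInstance

universe u v

theorem aux_main {k : Type u_k} {R : Type u_R} [Field k] [CharZero k] [Ring R] [Algebra k R]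
    (n : ℕ) :
    ∀ (M : Type u) (N : Type v) [AddCommGroup M] [Module k M] [Module R M] [IsScalarTower k R M]
      [FiniteDimensional k M] [IsSemisimpleModule R M]
      [AddCommGroup N] [Module k N] [Module R N] [IsScalarTower k R N] [FiniteDimensional k N]
      [IsSemisimpleModule R N],
      Module.finrank k M ≤ n →
      (∀ x : R, traceOfSMul k (M := M) (R := R) x = traceOfSMul k (M := N) (R := R) x) →
      Nonempty (M ≃ₗ[R] N) := by
  induction n with
  | zero =>
    intro M N _ _ _ _ _ _ _ _ _ _ _ _ hfr h
    haveI hM : Subsingleton M := Module.finrank_zero_iff.1 (Nat.le_zero.1 hfr)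
    haveI hN : Subsingleton N := trivial_case k h hM
    exact ⟨LinearEquiv.ofSubsingleton M N⟩
  | succ n ih =>
    intro M N _ _ _ _ _ _ _ _ _ _ _ _ hfr h
    by_cases hM : Subsingleton M
    · haveI hN : Subsingleton N := trivial_case k h hM
      exact ⟨LinearEquiv.ofSubsingleton M N⟩
    haveI : Nontrivial M := not_subsingleton_iff_nontrivial.1 hM
    obtain ⟨S, hS⟩ := IsSemisimpleModule.exists_simple_submodule (R := R) (M := M)
    haveI := hS
    obtain ⟨T, hTs, ⟨eTS⟩⟩ := peel k h S hS
    haveI := hTs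
    obtain ⟨S', hS'c⟩ := exists_isCompl S
    obtain ⟨T', hT'c⟩ := exists_isCompl T
    haveI : FiniteDimensional k ↥S :=
      FiniteDimensional.of_injective ((S.subtype).restrictScalars k) S.injective_subtype
    haveI : FiniteDimensional k ↥S' :=
      FiniteDimensional.of_injective ((S'.subtype).restrictScalars k) S'.injective_subtype
    haveI : FiniteDimensional k ↥T :=
      FiniteDimensional.of_injective ((T.subtype).restrictScalars k) T.injective_subtype
    haveI : FiniteDimensional k ↥T' :=
      FiniteDimensional.of_injective ((T'.subtype).restrictScalars k) T'.injective_subtype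
    set eM := Submodule.prodEquivOfIsCompl S S' hS'c with heM
    set eN := Submodule.prodEquivOfIsCompl T T' hT'c with heN
    have h' : ∀ x : R, traceOfSMul k (M := ↥S') (R := R) x
        = traceOfSMul k (M := ↥T') (R := R) x := by
      intro x
      have h1 := traceOfSMul_congr k eM x
      have h2 := traceOfSMul_prod k (M := ↥S) (N := ↥S') x
      have h3 := traceOfSMul_congr k eN x
      have h4 := traceOfSMul_prod k (M := ↥T) (N := ↥T') x
      have h5 := traceOfSMul_congr k eTS x
      have : traceOfSMul k (M := ↥S) (R := R) x + traceOfSMul k (M := ↥S') (R := R) x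
          = traceOfSMul k (M := ↥S) (R := R) x + traceOfSMul k (M := ↥T') (R := R) x := by
        rw [← h2, h1, h x, ← h3, h4, h5]
      exact add_left_cancel this
    have hrank : Module.finrank k ↥S + Module.finrank k ↥S' = Module.finrank k M := by
      rw [← Module.finrank_prod (R := k) (M := ↥S) (M' := ↥S')]
      exact LinearEquiv.finrank_eq (eM.restrictScalars k)
    haveI : Nontrivial ↥S := hS.nontrivial
    have hSpos : 0 < Module.finrank k ↥S := Module.finrank_pos
    have hbound : Module.finrank k ↥S' ≤ n := by omega
    obtain ⟨f⟩ := ih ↥S' ↥T' hbound h'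
    exact ⟨eM.symm.trans ((eTS.symm.prodCongr f).trans eN)⟩

end Main


end Aux

/-- Over a characteristic-zero field `k`, two semisimple `R`-modules that are
finite-dimensional over `k` and have the same trace function are isomorphic. -/
theorem linearEquiv_of_trace_eq_of_isSemisimple (k R M N : Type*) [Field k] [CharZero k] [Ring R]
    [Algebra k R]
    [AddCommGroup M] [Module k M] [Module R M] [IsScalarTower k R M] [FiniteDimensional k M]
    [AddCommGroup N] [Module k N] [Module R N] [IsScalarTower k R N] [FiniteDimensional k N]
    [IsSemisimpleModule R M] [IsSemisimpleModule R N]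
    (h : ∀ x : R, traceOfSMul k (M := M) x = traceOfSMul k (M := N) x) :
    Nonempty (M ≃ₗ[R] N) :=
  aux_main (Module.finrank k M) M N le_rfl h
end

section
/- Let k be a field, let R be a k-algebra, and let V₀, V₁, …, Vₙ be pairwise non-isomorphic simple R-modules, each finite-dimensional as a k-vector space. Then there exists an element e ∈ R such that e acts as the identity on V₀ (that is, e • v = v for all v ∈ V₀) and e acts as zero on each Vᵢ for 1 ≤ i ≤ n (that is, e • v = 0 for all v ∈ Vᵢ). -/
open LinearMap Submodule

section Aux

variable {R : Type*} [Ring R]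

/-- A finite product of simple modules is semisimple. -/
lemma pi_semisimple_aux {A : Type*} [Finite A] [DecidableEq A] (W : A → Type*)
    [∀ a, AddCommGroup (W a)] [∀ a, Module R (W a)] [∀ a, IsSimpleModule R (W a)] :
    IsSemisimpleModule R (∀ a, W a) := by
  refine isSemisimpleModule_of_isSemisimpleModule_submodule'
    (p := fun a => range (single R W a)) (fun a => ?_) (iSup_range_single R W)
  have hinj : Function.Injective (single R W a) := fun x y h => by
    have h2 := congrFun h a
    simpa using h2
  have e : W a ≃ₗ[R] range (single R W a) := LinearEquiv.ofInjective _ hinj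
  exact IsSemisimpleModule.congr e.symm

/-- Selector projection commutes with all `R`-endomorphisms when cross-homs vanish. -/
lemma commute_selector_aux {A : Type*} [Fintype A] [DecidableEq A]
    (W : A → Type*) [∀ a, AddCommGroup (W a)] [∀ a, Module R (W a)]
    (s : A → Prop) [DecidablePred s]
    (hz : ∀ a b : A, ¬ (s a ↔ s b) → ∀ f : W b →ₗ[R] W a, f = 0)
    (φ : (∀ a, W a) →ₗ[R] ∀ a, W a) (m : ∀ a, W a) (a : A) :
    φ (fun b => if s b then m b else 0) a = if s a then φ m a else 0 := by
  have key : ∀ (y : ∀ a, W a), φ y a = ∑ b, φ (Pi.single b (y b)) a := by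
    intro y
    conv_lhs => rw [← Finset.univ_sum_single y]
    rw [map_sum, Finset.sum_apply]
  by_cases ha : s a
  · simp only [if_pos ha]
    rw [key, key]
    refine Finset.sum_congr rfl fun b _ => ?_
    by_cases hb : s b
    · simp [hb]
    · have hf := hz a b (by tauto) ((proj a).comp (φ.comp (single R W b)))
      have h1 : φ (Pi.single b (m b)) a = 0 := congrFun (congrArg DFunLike.coe hf) (m b)
      simp [hb, h1]
  · simp only [if_neg ha]
    rw [key]
    refine Finset.sum_eq_zero fun b _ => ?_
    by_cases hb : s b
    · have hf := hz a b (by tauto) ((proj a).comp (φ.comp (single R W b)))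
      have h1 : φ (Pi.single b (m b)) a = 0 := congrFun (congrArg DFunLike.coe hf) (m b)
      simp [hb, h1]
    · simp [hb]

end Aux

/-- Given pairwise non-isomorphic simple modules `V 0, V 1, …, V n` over a
`k`-algebra `R`, each finite-dimensional over `k`, there is an element `e ∈ R` acting as the
identity on `V 0` and as zero on each `V i`, `i ≠ 0`. -/
theorem exists_projector (k R : Type*) [Field k] [Ring R] [Algebra k R]
    (n : ℕ) (V : Fin (n + 1) → Type*)
    [∀ i, AddCommGroup (V i)] [∀ i, Module k (V i)] [∀ i, Module R (V i)]
    [∀ i, IsScalarTower k R (V i)] [∀ i, FiniteDimensional k (V i)]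
    [∀ i, IsSimpleModule R (V i)]
    (hV : ∀ i j : Fin (n + 1), i ≠ j → IsEmpty (V i ≃ₗ[R] V j)) :
    ∃ e : R, (∀ v : V 0, e • v = v) ∧ ∀ i : Fin (n + 1), i ≠ 0 → ∀ v : V i, e • v = 0 := by
  classical
  -- Schur's lemma
  have schur : ∀ i j : Fin (n + 1), i ≠ j → ∀ f : V i →ₗ[R] V j, f = 0 := by
    intro i j hij f
    rcases f.bijective_or_eq_zero with hb | h0
    · exact ((hV i j hij).false (LinearEquiv.ofBijective f hb)).elim
    · exact h0
  -- bases
  let d : Fin (n + 1) → ℕ := fun i => Module.finrank k (V i)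
  let b : ∀ i, Module.Basis (Fin (d i)) k (V i) := fun i => Module.finBasis k (V i)
  -- the big semisimple module
  let σ := Σ i : Fin (n + 1), Fin (d i)
  let W : σ → Type _ := fun p => V p.1
  haveI : IsSemisimpleModule R (∀ p, W p) := pi_semisimple_aux W
  let x : ∀ p, W p := fun p => b p.1 p.2
  let N : Submodule R (∀ p, W p) := Submodule.span R {x}
  obtain ⟨N', hN'⟩ := exists_isCompl N
  let q : (∀ p, W p) →ₗ[R] (∀ p, W p) := N.subtype.comp (N.linearProjOfIsCompl N' hN')
  have hqmem : ∀ y, q y ∈ N := fun y => (N.linearProjOfIsCompl N' hN' y).2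
  have hxN : x ∈ N := Submodule.mem_span_singleton_self x
  have hqx : q x = x := by
    have := Submodule.linearProjOfIsCompl_apply_left hN' ⟨x, hxN⟩
    exact congrArg (Submodule.subtype N) this
  -- selector
  let s : σ → Prop := fun p => p.1 = 0
  have hz : ∀ p r : σ, ¬ (s p ↔ s r) → ∀ f : W r →ₗ[R] W p, f = 0 := by
    intro p r h f
    have hne : r.1 ≠ p.1 := by
      intro h'
      exact h (by simp [s, h'])
    exact schur r.1 p.1 hne f
  -- the projected vector lies in N
  let Px : ∀ p, W p := fun p => if s p then x p else 0
  have hPx : Px = q Px := by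
    funext a
    have := commute_selector_aux W s hz q x a
    rw [hqx] at this
    exact this.symm
  have hPxN : Px ∈ N := hPx ▸ hqmem Px
  obtain ⟨r, hr⟩ := Submodule.mem_span_singleton.mp hPxN
  have key : ∀ (i : Fin (n + 1)) (j : Fin (d i)),
      r • b i j = if i = 0 then b i j else 0 := by
    intro i j
    have := congrFun hr ⟨i, j⟩
    simpa [Px, x, s, W] using this
  refine ⟨r, ?_, ?_⟩
  · -- identity on V 0
    let f : V 0 →ₗ[k] V 0 :=
      { toFun := fun v => r • v
        map_add' := fun v w => smul_add r v w
        map_smul' := fun c v => smul_comm r c v }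
    have hf : f = LinearMap.id := by
      refine Module.Basis.ext (b 0) fun j => ?_
      simpa [f] using key 0 j
    intro v
    exact congrFun (congrArg DFunLike.coe hf) v
  · -- zero on V i, i ≠ 0
    intro i hi
    let f : V i →ₗ[k] V i :=
      { toFun := fun v => r • v
        map_add' := fun v w => smul_add r v w
        map_smul' := fun c v => smul_comm r c v }
    have hf : f = 0 := by
      refine Module.Basis.ext (b i) fun j => ?_
      simpa [f, hi] using key i j
    intro v
    exact congrFun (congrArg DFunLike.coe hf) v
end

section
/- Let k be a field of characteristic zero, let A be a commutative k-algebra, and let R be a (possibly non-commutative) A-algebra that is free of finite rank n as an A-module, with A-basis b₁, …, bₙ. Let d = det((tr_{R/A}(bᵢ·bⱼ))₁≤i,j≤n) ∈ A be the discriminant of this basis. Let K be a field and χ : A → K a ring homomorphism, and equip K with the A-algebra structure given by χ. Then the Jacobson radical of the K-algebra K ⊗_A R is zero (equivalently, K ⊗_A R is a semisimple K-algebra) if and only if χ(d) ≠ 0 in K. -/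
open scoped TensorProduct


private lemma nilpotent_of_mem_jacobson' {S : Type*} [Ring S] [IsArtinianRing S] {z : S}
    (hz : z ∈ Ideal.jacobson (⊥ : Ideal S)) : IsNilpotent z := by
  let f : ℕ →o (Ideal S)ᵒᵈ :=
    ⟨fun m => Ideal.span {z ^ (m + 1)}, fun i j hij => Submodule.span_le.mpr <| by
      rintro _ rfl
      exact Submodule.mem_span_singleton.mpr ⟨z ^ (j - i), by
        rw [smul_eq_mul, ← pow_add]; congr 1; omega⟩⟩
  obtain ⟨m, hm⟩ := IsArtinian.monotone_stabilizes f
  have hmem : z ^ (m + 1) ∈ Ideal.span {z ^ (m + 2)} := by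
    have h1 : Ideal.span {z ^ (m + 1)} = Ideal.span {z ^ (m + 2)} := hm (m + 1) (Nat.le_succ m)
    rw [← h1]
    exact Submodule.mem_span_singleton_self _
  obtain ⟨a, ha⟩ := Submodule.mem_span_singleton.mp hmem
  rw [smul_eq_mul] at ha
  obtain ⟨u, hu⟩ := Ideal.mem_jacobson_iff.mp hz (-a)
  rw [Ideal.mem_bot, sub_eq_zero] at hu
  refine ⟨m + 1, ?_⟩
  calc z ^ (m + 1) = 1 * z ^ (m + 1) := (one_mul _).symm
    _ = (u * -a * z + u) * z ^ (m + 1) := by rw [hu]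
    _ = u * -a * (z * z ^ (m + 1)) + u * z ^ (m + 1) := by rw [add_mul, mul_assoc]
    _ = -(u * (a * z ^ (m + 2))) + u * z ^ (m + 1) := by
        rw [mul_neg, neg_mul, mul_assoc, ← pow_succ']
    _ = -(u * z ^ (m + 1)) + u * z ^ (m + 1) := by rw [ha]
    _ = 0 := neg_add_cancel _


private lemma isSemisimpleRing_of_jacobson_bot' {S : Type*} [Ring S] [IsArtinianRing S]
    (h : Ideal.jacobson (⊥ : Ideal S) = ⊥) : IsSemisimpleRing S := by
  classical
  obtain ⟨J, hJT, hmin⟩ := IsArtinian.set_has_minimal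
    {I : Ideal S | ∃ t : Finset (Ideal S), (∀ m ∈ t, m.IsMaximal) ∧ I = t.inf id}
    ⟨⊤, ∅, fun m hm => absurd hm (Finset.notMem_empty m), by simp⟩
  obtain ⟨s, hs, rfl⟩ := hJT
  have hJbot : s.inf id = ⊥ := by
    have hle : s.inf id ≤ Ideal.jacobson (⊥ : Ideal S) := le_sInf <| by
      rintro m ⟨-, hm⟩
      have hmem : s.inf id ⊓ m ∈
          {I : Ideal S | ∃ t : Finset (Ideal S), (∀ m ∈ t, m.IsMaximal) ∧ I = t.inf id} := by
        refine ⟨insert m s, ?_, ?_⟩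
        · intro x hx
          rcases Finset.mem_insert.mp hx with rfl | hx
          · exact hm
          · exact hs x hx
        · rw [Finset.inf_insert, inf_comm]; rfl
      have hne := hmin _ hmem
      have heq : s.inf id ⊓ m = s.inf id := eq_of_le_of_not_lt inf_le_left hne
      exact inf_eq_left.mp heq
    rw [h] at hle
    exact le_bot_iff.mp hle
  haveI hsimple : ∀ i : s, IsSimpleModule S (S ⧸ (i : Ideal S)) := fun i =>
    isSimpleModule_iff_isCoatom.mpr (Ideal.isMaximal_def.mp (hs i i.2))
  haveI semi : IsSemisimpleModule S (∀ i : s, S ⧸ (i : Ideal S)) := by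
    refine isSemisimpleModule_of_isSemisimpleModule_submodule'
      (p := fun i => LinearMap.range (LinearMap.single S (fun i : s => S ⧸ (i : Ideal S)) i))
      (fun i => ?_) ?_
    · have hinj : Function.Injective (LinearMap.single S (fun i : s => S ⧸ (i : Ideal S)) i) :=
        fun x y hxy => Pi.single_injective i hxy
      exact IsSemisimpleModule.congr
        (N := ↥(LinearMap.range (LinearMap.single S (fun i : s => S ⧸ (i : Ideal S)) i)))
        (M := S ⧸ (i : Ideal S)) (LinearEquiv.ofInjective _ hinj).symm
    · simp_rw [LinearMap.range_eq_map, Submodule.iSup_map_single, Submodule.pi_top]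
  let φ : S →ₗ[S] ∀ i : s, S ⧸ (i : Ideal S) := LinearMap.pi fun i => ((i : Ideal S)).mkQ
  have hker : LinearMap.ker φ = ⊥ := by
    rw [LinearMap.ker_pi]
    simp only [Submodule.ker_mkQ, φ]
    rw [← hJbot, Finset.inf_eq_iInf, iInf_subtype]
    rfl
  exact IsSemisimpleModule.congr (N := S) (M := ↥(LinearMap.range φ))
    (LinearEquiv.ofInjective φ (LinearMap.ker_eq_bot.mp hker))



set_option maxHeartbeats 1000000 in
/-- Let `A` be a commutative algebra over a characteristic-zero field `k`, and
`R` a (possibly non-commutative) `A`-algebra that is free of finite rank `n` over `A`, with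
basis `b`. Let `d` be the discriminant of this basis. For any field `K` equipped with an
`A`-algebra structure `χ = algebraMap A K`, the Jacobson radical (intersection of maximal left
ideals) of `K ⊗[A] R` is zero iff `χ(d) ≠ 0`. -/
theorem jacobson_eq_bot_iff_discr_ne_zero (k A R K : Type*) [Field k] [CharZero k]
    [CommRing A] [Algebra k A] [Ring R] [Algebra A R] [Field K] [Algebra A K]
    (n : ℕ) (b : Module.Basis (Fin n) A R) :
    sInf {I : Ideal (K ⊗[A] R) | I.IsMaximal} = ⊥ ↔
      algebraMap A K
        (Matrix.det (Matrix.of fun i j : Fin n =>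
          LinearMap.trace A R (LinearMap.mulLeft A (b i * b j)))) ≠ 0 := by
  classical
  letI : Module.Free A R := .of_basis b
  letI : Module.Finite A R := .of_basis b
  let B : Module.Basis (Fin n) K (K ⊗[A] R) := Algebra.TensorProduct.basis K b
  letI : Module.Finite K (K ⊗[A] R) := .of_basis B
  letI : Module.Free K (K ⊗[A] R) := .of_basis B
  haveI : IsArtinianRing (K ⊗[A] R) := IsArtinianRing.of_finite K _
  haveI : CharZero K :=
    charZero_of_injective_ringHom (((algebraMap A K).comp (algebraMap k A)).injective)
  have hJac : Ideal.jacobson (⊥ : Ideal (K ⊗[A] R)) = sInf {I : Ideal (K ⊗[A] R) | I.IsMaximal} := by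
    simp [Ideal.jacobson]
  -- the trace functional
  set Tr : (K ⊗[A] R) →ₗ[K] K :=
    (LinearMap.trace K (K ⊗[A] R)).comp (LinearMap.mul K (K ⊗[A] R)) with hTrdef
  have hTr : ∀ w : K ⊗[A] R, Tr w = LinearMap.trace K _ (LinearMap.mulLeft K w) := fun w =>
    congrArg (LinearMap.trace K _) (LinearMap.ext fun x => rfl)
  -- base change compatibility
  have key : ∀ r : R,
      (LinearMap.mulLeft A r).baseChange K = LinearMap.mulLeft K ((1 : K) ⊗ₜ[A] r) := by
    intro r
    refine B.ext fun i => ?_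
    simp only [B, Algebra.TensorProduct.basis_apply, LinearMap.baseChange_tmul,
      LinearMap.mulLeft_apply, Algebra.TensorProduct.tmul_mul_tmul, one_mul]
  set MA : Matrix (Fin n) (Fin n) A :=
    Matrix.of fun i j : Fin n => LinearMap.trace A R (LinearMap.mulLeft A (b i * b j)) with hMA
  set G : Matrix (Fin n) (Fin n) K := MA.map (algebraMap A K) with hGdef
  have hGdet : algebraMap A K MA.det = G.det := RingHom.map_det (algebraMap A K) MA
  have hGij : ∀ i j, G i j = Tr (B i * B j) := by
    intro i j
    rw [hTr]
    simp only [G, MA, Matrix.map_apply, Matrix.of_apply]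
    rw [← LinearMap.trace_baseChange, key]
    congr 1
    simp [B, Algebra.TensorProduct.basis_apply, Algebra.TensorProduct.tmul_mul_tmul]
  -- mulVec formula
  have hmv : ∀ (x : K ⊗[A] R) (j : Fin n),
      Tr (B j * x) = G.mulVec (fun i => B.repr x i) j := by
    intro x j
    conv_lhs => rw [← B.sum_repr x]
    rw [Finset.mul_sum]
    simp_rw [mul_smul_comm]
    rw [map_sum]
    simp_rw [map_smul, smul_eq_mul]
    simp only [Matrix.mulVec, dotProduct]
    exact Finset.sum_congr rfl fun i _ => by rw [hGij, mul_comm]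
  constructor
  · -- Jacobson radical zero implies discriminant nonzero
    intro hbot hd
    have hdG : G.det = 0 := by rw [← hGdet, hd]
    obtain ⟨v, hv, hmv0⟩ := (Matrix.exists_mulVec_eq_zero_iff).mpr hdG
    set x : K ⊗[A] R := B.equivFun.symm v with hxdef
    have hrepr : (fun i => B.repr x i) = v := by
      funext i
      rw [← B.equivFun_apply, hxdef, LinearEquiv.apply_symm_apply]
    have hx0 : x ≠ 0 := fun h => hv (by
      rw [← hrepr, h]; funext i; simp)
    have hbase : ∀ j, Tr (B j * x) = 0 := fun j => by
      rw [hmv, hrepr, hmv0]; rfl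
    have hx : ∀ y, Tr (y * x) = 0 := by
      have heq : Tr ∘ₗ LinearMap.mulRight K x = 0 :=
        B.ext fun j => by simpa [LinearMap.mulRight_apply] using hbase j
      intro y
      simpa [LinearMap.mulRight_apply] using LinearMap.congr_fun heq y
    -- the radical of the trace form is an ideal
    let I : Ideal (K ⊗[A] R) :=
      { carrier := {w | ∀ y, Tr (y * w) = 0}
        add_mem' := fun {a c} ha hc y => by rw [mul_add, map_add, ha y, hc y, add_zero]
        zero_mem' := fun y => by rw [mul_zero, map_zero]
        smul_mem' := fun c w hw y => by
          rw [smul_eq_mul, ← mul_assoc]; exact hw (y * c) }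
    haveI : IsSemisimpleRing (K ⊗[A] R) :=
      isSemisimpleRing_of_jacobson_bot' (by rw [hJac, hbot])
    obtain ⟨e, he, hspan⟩ := IsSemisimpleRing.ideal_eq_span_idempotent I
    have heI' : e ∈ I := by rw [hspan]; exact Submodule.mem_span_singleton_self e
    have heI : ∀ y, Tr (y * e) = 0 := heI'
    have h0 : Tr e = 0 := by have := heI 1; rwa [one_mul] at this
    have hproj : LinearMap.IsProj (LinearMap.range (LinearMap.mulLeft K e))
        (LinearMap.mulLeft K e) := by
      refine ⟨fun y => LinearMap.mem_range_self _ y, ?_⟩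
      rintro y ⟨w, rfl⟩
      simp only [LinearMap.mulLeft_apply, ← mul_assoc, he.eq]
    have hfr : (Module.finrank K (LinearMap.range (LinearMap.mulLeft K e)) : K) = 0 := by
      rw [← hproj.trace, ← hTr, h0]
    have hfr0 : Module.finrank K (LinearMap.range (LinearMap.mulLeft K e)) = 0 :=
      Nat.cast_eq_zero.mp hfr
    have hrange : LinearMap.range (LinearMap.mulLeft K e) = ⊥ :=
      Submodule.finrank_eq_zero.mp hfr0
    have he0 : e = 0 := by
      have hmem : e ∈ LinearMap.range (LinearMap.mulLeft K e) := ⟨1, by simp⟩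
      rw [hrange, Submodule.mem_bot] at hmem
      exact hmem
    have hI : I = ⊥ := by
      rw [hspan, he0]
      exact Ideal.span_eq_bot.mpr (by simp)
    have : x ∈ I := hx
    rw [hI, Submodule.mem_bot] at this
    exact hx0 this
  · -- discriminant nonzero implies Jacobson radical zero
    intro hdne
    rw [← hJac]
    refine eq_bot_iff.mpr fun z hz => ?_
    have hTz : ∀ j, Tr (B j * z) = 0 := by
      intro j
      have hmem : B j * z ∈ Ideal.jacobson (⊥ : Ideal (K ⊗[A] R)) := by
        simpa [smul_eq_mul] using (Ideal.jacobson (⊥ : Ideal (K ⊗[A] R))).smul_mem (B j) hz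
      obtain ⟨m, hm⟩ := nilpotent_of_mem_jacobson' hmem
      have hLnil : IsNilpotent (LinearMap.mulLeft K (B j * z)) :=
        ⟨m, by rw [LinearMap.pow_mulLeft, hm, LinearMap.mulLeft_zero_eq_zero]⟩
      rw [hTr]
      exact (LinearMap.isNilpotent_trace_of_isNilpotent hLnil).eq_zero
    have hmvz : G.mulVec (fun i => B.repr z i) = 0 := by
      funext j
      rw [← hmv, hTz j]
      rfl
    have hrz : (fun i => B.repr z i) = 0 := by
      by_contra hne
      exact (by rw [← hGdet]; exact hdne :  G.det ≠ 0)
        (Matrix.exists_mulVec_eq_zero_iff.mp ⟨_, hne, hmvz⟩)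
    have : z = 0 := by
      refine B.ext_elem fun i => ?_
      have := congrFun hrz i
      simpa using this
    simpa [Submodule.mem_bot] using this
end

section
/- Let A be a commutative ring, let B be a commutative A-algebra that is free of finite rank m as an A-module with A-basis (b₁, …, b_m), and let C be a commutative B-algebra that is free of finite rank n as a B-module with B-basis (c₁, …, cₙ) (so that C is free of rank mn as an A-module with basis (bᵢcⱼ)). Then the discriminant of the A-basis (bᵢcⱼ) of C equals the n-th power of the discriminant of the A-basis (bᵢ) of B times the norm from B to A of the discriminant of the B-basis (cⱼ) of C: det((tr_{C/A}(bᵢcⱼ · b_k c_l))) = det((tr_{B/A}(bᵢ·b_k)))ⁿ · N_{B/A}(det((tr_{C/B}(cⱼ·c_l)))). -/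
open Matrix Polynomial

namespace DiscrTowerAux

universe u v

variable {m : ℕ} {A : Type v} [CommRing A] {B : Type u} [CommRing B]

/-- Flatten a matrix of matrices obtained by applying `ρ` entrywise. -/
def flat {ι κ : Type*} (ρ : B →+* Matrix (Fin m) (Fin m) A) (M : Matrix ι κ B) :
    Matrix (ι × Fin m) (κ × Fin m) A :=
  Matrix.of fun p q => ρ (M p.1 q.1) p.2 q.2

@[simp] lemma flat_apply {ι κ : Type*} (ρ : B →+* Matrix (Fin m) (Fin m) A)
    (M : Matrix ι κ B) (p q) : flat ρ M p q = ρ (M p.1 q.1) p.2 q.2 := rfl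

lemma flat_mul {ι κ ι' : Type*} [Fintype κ] (ρ : B →+* Matrix (Fin m) (Fin m) A)
    (M : Matrix ι κ B) (N : Matrix κ ι' B) :
    flat ρ (M * N) = flat ρ M * flat ρ N := by
  ext ⟨i, k⟩ ⟨j, l⟩
  simp only [flat_apply, Matrix.mul_apply, map_sum, _root_.map_mul, Fintype.sum_prod_type,
    Matrix.sum_apply]

@[simp] lemma flat_zero {ι κ : Type*} (ρ : B →+* Matrix (Fin m) (Fin m) A) :
    flat ρ (0 : Matrix ι κ B) = 0 := by
  ext ⟨i, k⟩ ⟨j, l⟩; simp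

@[simp] lemma flat_one {ι : Type*} [DecidableEq ι] (ρ : B →+* Matrix (Fin m) (Fin m) A) :
    flat ρ (1 : Matrix ι ι B) = 1 := by
  ext ⟨i, k⟩ ⟨j, l⟩
  by_cases h : i = j <;> simp [h, Matrix.one_apply, Prod.ext_iff]

lemma flat_diagonal {ι : Type*} [DecidableEq ι] (ρ : B →+* Matrix (Fin m) (Fin m) A)
    (d : ι → B) :
    flat ρ (Matrix.diagonal d) =
      Matrix.reindex (Equiv.prodComm (Fin m) ι) (Equiv.prodComm (Fin m) ι)
        (Matrix.blockDiagonal fun i => ρ (d i)) := by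
  ext ⟨i, k⟩ ⟨j, l⟩
  by_cases h : i = j <;>
    simp [h, Matrix.diagonal_apply, Matrix.blockDiagonal_apply]

lemma det_flat_diagonal {ι : Type*} [DecidableEq ι] [Fintype ι]
    (ρ : B →+* Matrix (Fin m) (Fin m) A) (d : ι → B) :
    (flat ρ (Matrix.diagonal d)).det = ∏ i, (ρ (d i)).det := by
  rw [flat_diagonal, Matrix.det_reindex_self, Matrix.det_blockDiagonal]

lemma det_flat_smul_one {ι : Type*} [DecidableEq ι] [Fintype ι]
    (ρ : B →+* Matrix (Fin m) (Fin m) A) (p : B) :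
    (flat ρ (p • (1 : Matrix ι ι B))).det = (ρ p).det ^ Fintype.card ι := by
  rw [Matrix.smul_one_eq_diagonal, det_flat_diagonal, Finset.prod_const, Finset.card_univ]

lemma flat_fromBlocks {ι₁ ι₂ κ₁ κ₂ : Type*} (ρ : B →+* Matrix (Fin m) (Fin m) A)
    (P : Matrix ι₁ κ₁ B) (Q : Matrix ι₁ κ₂ B) (R : Matrix ι₂ κ₁ B) (S : Matrix ι₂ κ₂ B) :
    flat ρ (fromBlocks P Q R S) =
      Matrix.reindex (Equiv.sumProdDistrib ι₁ ι₂ (Fin m)).symm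
        (Equiv.sumProdDistrib κ₁ κ₂ (Fin m)).symm
        (fromBlocks (flat ρ P) (flat ρ Q) (flat ρ R) (flat ρ S)) := by
  ext ⟨i | i, k⟩ ⟨j | j, l⟩ <;> rfl

lemma flat_reindex {ι κ : Type*} (ρ : B →+* Matrix (Fin m) (Fin m) A) (σ : ι ≃ κ)
    (M : Matrix ι ι B) :
    flat ρ (Matrix.reindex σ σ M) =
      Matrix.reindex (σ.prodCongr (Equiv.refl (Fin m))) (σ.prodCongr (Equiv.refl (Fin m)))
        (flat ρ M) := by
  ext ⟨i, k⟩ ⟨j, l⟩ <;> rfl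


theorem det_flat_eq : ∀ (n : ℕ) {B : Type u} [CommRing B] {A : Type v} [CommRing A] {m : ℕ}
    (ρ : B →+* Matrix (Fin m) (Fin m) A) (M : Matrix (Fin n) (Fin n) B),
    (flat ρ M).det = (ρ M.det).det := by
  intro n
  induction n with
  | zero =>
    intro B _ A _ m ρ M
    simp [Matrix.det_isEmpty]
  | succ n IH =>
    intro B _ A _ m ρ M
    -- reindex to `Fin 1 ⊕ Fin n`
    have σ : Fin (n + 1) ≃ Fin 1 ⊕ Fin n :=
      (finCongr (Nat.add_comm n 1)).trans finSumFinEquiv.symm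
    obtain ⟨M', rfl⟩ : ∃ M' : Matrix (Fin 1 ⊕ Fin n) (Fin 1 ⊕ Fin n) B,
        M = Matrix.reindex σ.symm σ.symm M' := ⟨Matrix.reindex σ σ M, by simp⟩
    rw [flat_reindex, Matrix.det_reindex_self, Matrix.det_reindex_self]
    -- block decomposition
    set a : B := M' (Sum.inl 0) (Sum.inl 0) with ha
    set r := M'.toBlocks₁₂ with hr
    set cc := M'.toBlocks₂₁ with hcc
    set D := M'.toBlocks₂₂ with hD
    have hM' : M' = fromBlocks (a • 1) r cc D := by
      ext (i | i) (j | j)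
      · have hi : i = 0 := Subsingleton.elim _ _
        have hj : j = 0 := Subsingleton.elim _ _
        subst hi; subst hj
        simp [ha, Matrix.one_apply]
      · rfl
      · rfl
      · rfl
    -- the polynomial ring setup
    set τ : B →+* Matrix (Fin m) (Fin m) (Polynomial A) :=
      (Polynomial.C (R := A)).mapMatrix.comp ρ with hτ
    have hcomm : ∀ x : B, Commute (τ x) (Matrix.scalar (Fin m) (X : Polynomial A)) :=
      fun x => (Matrix.scalar_commute _ (fun r' => Commute.all _ _) _).symm
    set ρ' : Polynomial B →+* Matrix (Fin m) (Fin m) (Polynomial A) :=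
      Polynomial.eval₂RingHom' τ (Matrix.scalar (Fin m) X) hcomm with hρ'
    have hρ'C : ∀ x : B, ρ' (Polynomial.C x) = (ρ x).map Polynomial.C := fun x => by
      simp [hρ', hτ, Polynomial.eval₂RingHom', Polynomial.eval₂_C]
    have hρ'X : ρ' Polynomial.X = Matrix.scalar (Fin m) X := by
      simp [hρ', Polynomial.eval₂RingHom', Polynomial.eval₂_X]
    set p : Polynomial B := Polynomial.X + Polynomial.C a with hp
    set MX : Matrix (Fin 1 ⊕ Fin n) (Fin 1 ⊕ Fin n) (Polynomial B) :=
      fromBlocks (p • 1) (r.map Polynomial.C) (cc.map Polynomial.C) (D.map Polynomial.C) with hMX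
    set L : Matrix (Fin 1 ⊕ Fin n) (Fin 1 ⊕ Fin n) (Polynomial B) :=
      fromBlocks 1 0 (-(cc.map Polynomial.C)) (p • 1) with hL
    set N : Matrix (Fin n) (Fin n) (Polynomial B) :=
      -(cc.map Polynomial.C * r.map Polynomial.C) + p • D.map Polynomial.C with hN
    have hLM : L * MX = fromBlocks (p • 1) (r.map Polynomial.C) 0 N := by
      rw [hL, hMX, Matrix.fromBlocks_multiply]
      congr 1 <;> simp [Matrix.smul_mul, Matrix.mul_smul, hN]
    have hdetB : p ^ n * MX.det = p * N.det := by
      have h1 : L.det = p ^ n := by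
        rw [hL, Matrix.det_fromBlocks_zero₁₂]
        simp [Matrix.det_smul]
      have h2 : (L * MX).det = p * N.det := by
        rw [hLM, Matrix.det_fromBlocks_zero₂₁]
        simp [Matrix.det_smul]
      calc p ^ n * MX.det = L.det * MX.det := by rw [h1]
        _ = (L * MX).det := (Matrix.det_mul _ _).symm
        _ = p * N.det := h2
    have hdetA : (ρ' p).det ^ n * (flat ρ' MX).det = (ρ' p).det * (flat ρ' N).det := by
      have h1 : (flat ρ' L).det = (ρ' p).det ^ n := by
        rw [hL, flat_fromBlocks, Matrix.det_reindex_self, flat_zero,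
          Matrix.det_fromBlocks_zero₁₂, flat_one, Matrix.det_one, one_mul,
          det_flat_smul_one, Fintype.card_fin]
      have h2 : (flat ρ' (L * MX)).det = (ρ' p).det * (flat ρ' N).det := by
        rw [hLM, flat_fromBlocks, Matrix.det_reindex_self, flat_zero,
          Matrix.det_fromBlocks_zero₂₁, det_flat_smul_one, Fintype.card_fin, pow_one]
      calc (ρ' p).det ^ n * (flat ρ' MX).det = (flat ρ' L).det * (flat ρ' MX).det := by rw [h1]
        _ = (flat ρ' (L * MX)).det := by rw [flat_mul, Matrix.det_mul]
        _ = (ρ' p).det * (flat ρ' N).det := h2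
    have hIH : (flat ρ' N).det = (ρ' N.det).det := IH ρ' N
    have hmonic : ((ρ' p).det).Monic := by
      have hρ'p : ρ' p = Matrix.charmatrix (-(ρ a)) := by
        rw [hp, map_add, hρ'X, hρ'C]
        rw [Matrix.charmatrix]
        ext i j
        simp [Matrix.scalar_apply, Matrix.diagonal_apply, Matrix.one_apply, apply_ite]
      rw [hρ'p]
      exact Matrix.charpoly_monic _
    have hreg : IsLeftRegular ((ρ' p).det ^ n) := (hmonic.pow n).isRegular.left
    have key' : (flat ρ' MX).det = (ρ' MX.det).det := by
      apply hreg
      calc (ρ' p).det ^ n * (flat ρ' MX).det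
          = (ρ' p).det * (ρ' N.det).det := by rw [hdetA, hIH]
        _ = (ρ' (p * N.det)).det := by rw [_root_.map_mul, Matrix.det_mul]
        _ = (ρ' (p ^ n * MX.det)).det := by rw [← hdetB]
        _ = (ρ' p).det ^ n * (ρ' MX.det).det := by
            rw [_root_.map_mul, map_pow, Matrix.det_mul, Matrix.det_pow]
    -- specialize at X = 0
    have hev : (Polynomial.evalRingHom (0 : A)).mapMatrix.comp ρ'
        = ρ.comp (Polynomial.evalRingHom (0 : B)) := by
      apply Polynomial.ringHom_ext
      · intro x
        simp only [RingHom.comp_apply, hρ'C]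
        ext k l
        simp
      · simp only [RingHom.comp_apply, hρ'X]
        ext k l
        simp [Matrix.scalar_apply, Matrix.diagonal_apply, apply_ite]
    have hev' : ∀ x : Polynomial B,
        (ρ' x).map (Polynomial.eval 0) = ρ (Polynomial.eval 0 x) := fun x => by
      have := congrArg (fun f => f x) (congrArg DFunLike.coe hev)
      simpa using this
    have hMXev : MX.map (Polynomial.eval 0) = M' := by
      rw [hMX, Matrix.fromBlocks_map, hM']
      have hblock : (p • (1 : Matrix (Fin 1) (Fin 1) (Polynomial B))).map (Polynomial.eval 0)
          = a • 1 := by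
        ext i j
        simp [Matrix.smul_apply, Matrix.one_apply, apply_ite (Polynomial.eval (0 : B)), hp]
      rw [hblock]
      ext (i | i) (j | j) <;> simp
    have final := congrArg (Polynomial.eval (0 : A)) key'
    have hL2 : Polynomial.eval (0:A) (flat ρ' MX).det = (flat ρ M').det := by
      rw [← Polynomial.coe_evalRingHom, RingHom.map_det]
      congr 1
      ext ⟨i, k⟩ ⟨j, l⟩
      have h1 := congrFun (congrFun (hev' (MX i j)) k) l
      have h2 : Polynomial.eval 0 (MX i j) = M' i j := congrFun (congrFun hMXev i) j
      simp only [RingHom.mapMatrix_apply, Matrix.map_apply, flat_apply,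
        Polynomial.coe_evalRingHom]
      rw [h2] at h1
      simpa [Matrix.map_apply] using h1
    have hR2 : Polynomial.eval (0:A) (ρ' MX.det).det = (ρ M'.det).det := by
      rw [← Polynomial.coe_evalRingHom, RingHom.map_det]
      congr 1
      have h := congrArg (fun f => f MX.det) (congrArg DFunLike.coe hev)
      simp only [RingHom.coe_comp, Function.comp_apply] at h
      rw [h, RingHom.map_det, RingHom.mapMatrix_apply,
        show MX.map ⇑(Polynomial.evalRingHom (0:B)) = MX.map (Polynomial.eval 0) from rfl,
        hMXev]
    rw [← hL2, ← hR2, final]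

lemma mulLeft_eq_lmul {R S : Type*} [CommRing R] [CommRing S] [Algebra R S] (z : S) :
    LinearMap.mulLeft R z = (Algebra.lmul R S z : S →ₗ[R] S) := by
  ext w
  simp

end DiscrTowerAux


/-- For a tower `A → B → C` of commutative rings with `B` free of rank `m`
over `A` with basis `b` and `C` free of rank `n` over `B` with basis `c`, the discriminant of
the `A`-basis `(bᵢ cⱼ)` of `C` equals the `n`-th power of the discriminant of `b` times the
norm from `B` to `A` of the discriminant of `c`. -/
theorem discr_tower (A B C : Type*) [CommRing A] [CommRing B] [CommRing C]
    [Algebra A B] [Algebra B C] [Algebra A C] [IsScalarTower A B C]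
    (m n : ℕ) (b : Module.Basis (Fin m) A B) (c : Module.Basis (Fin n) B C) :
    Matrix.det (Matrix.of fun p q : Fin m × Fin n =>
        LinearMap.trace A C (LinearMap.mulLeft A
          ((algebraMap B C (b p.1) * c p.2) * (algebraMap B C (b q.1) * c q.2)))) =
      Matrix.det (Matrix.of fun i k : Fin m =>
          LinearMap.trace A B (LinearMap.mulLeft A (b i * b k))) ^ n *
        LinearMap.det (LinearMap.mulLeft A
          (Matrix.det (Matrix.of fun j l : Fin n =>
            LinearMap.trace B C (LinearMap.mulLeft B (c j * c l))))) := by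
  classical
  have htrC : ∀ z : C, LinearMap.trace A C (LinearMap.mulLeft A z) = Algebra.trace A C z := by
    intro z; rw [DiscrTowerAux.mulLeft_eq_lmul z, ← Algebra.trace_apply]
  have htrB : ∀ z : B, LinearMap.trace A B (LinearMap.mulLeft A z) = Algebra.trace A B z := by
    intro z; rw [DiscrTowerAux.mulLeft_eq_lmul z, ← Algebra.trace_apply]
  have htrBC : ∀ z : C, LinearMap.trace B C (LinearMap.mulLeft B z) = Algebra.trace B C z := by
    intro z; rw [DiscrTowerAux.mulLeft_eq_lmul z, ← Algebra.trace_apply]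
  set S : Matrix (Fin m) (Fin m) A := Algebra.traceMatrix A b with hSdef
  set T : Matrix (Fin n) (Fin n) B := Algebra.traceMatrix B c with hTdef
  set ρ : B →+* Matrix (Fin m) (Fin m) A := (Algebra.leftMulMatrix b).toRingHom with hρdef
  set Θ : Matrix (Fin m × Fin n) (Fin m × Fin n) A :=
    Matrix.blockDiagonal fun _ : Fin n => S with hΘdef
  set R : Matrix (Fin m × Fin n) (Fin m × Fin n) A :=
    Matrix.reindex (Equiv.prodComm (Fin n) (Fin m)) (Equiv.prodComm (Fin n) (Fin m))
      (DiscrTowerAux.flat ρ T) with hRdef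
  have hS : (Matrix.of fun i k : Fin m =>
      LinearMap.trace A B (LinearMap.mulLeft A (b i * b k))) = S := by
    ext i k
    simp only [Matrix.of_apply, htrB, hSdef, Algebra.traceMatrix_apply, Algebra.traceForm_apply]
  have hT : (Matrix.of fun j l : Fin n =>
      LinearMap.trace B C (LinearMap.mulLeft B (c j * c l))) = T := by
    ext j l
    simp only [Matrix.of_apply, htrBC, hTdef, Algebra.traceMatrix_apply, Algebra.traceForm_apply]
  have hmain : (Matrix.of fun p q : Fin m × Fin n =>
      LinearMap.trace A C (LinearMap.mulLeft A
        ((algebraMap B C (b p.1) * c p.2) * (algebraMap B C (b q.1) * c q.2)))) = Θ * R := by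
    ext p q
    have hrhs : (Θ * R) p q
        = ∑ u : Fin m, S p.1 u * (b.repr (T p.2 q.2 * b q.1)) u := by
      rw [Matrix.mul_apply, Fintype.sum_prod_type]
      have hterm : ∀ (u : Fin m) (v : Fin n),
          Θ p (u, v) * R (u, v) q
            = (if p.2 = v then S p.1 u * (Algebra.leftMulMatrix b (T v q.2)) u q.1 else 0) := by
        intro u v
        rw [hΘdef, hRdef]
        simp only [Matrix.blockDiagonal_apply, Matrix.reindex_apply, Matrix.submatrix_apply,
          Equiv.prodComm_symm, Equiv.prodComm_apply, Prod.swap_prod_mk,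
          DiscrTowerAux.flat_apply, ite_mul, zero_mul]
        rfl
      simp only [hterm]
      simp only [Finset.sum_ite_eq, Finset.mem_univ, if_true]
      refine Finset.sum_congr rfl fun u _ => ?_
      rw [Algebra.leftMulMatrix_eq_repr_mul]
    rw [hrhs]
    have hsum : ∑ u : Fin m, S p.1 u * (b.repr (T p.2 q.2 * b q.1)) u
        = Algebra.trace A B ((T p.2 q.2 * b q.1) * b p.1) := by
      have hz := congrFun (Algebra.traceMatrix_of_basis_mulVec b (T p.2 q.2 * b q.1)) p.1
      rw [← hz]
      simp [Matrix.mulVec, dotProduct, Module.Basis.equivFun_apply, hSdef]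
    rw [hsum]
    have hprod : (algebraMap B C (b p.1) * c p.2) * (algebraMap B C (b q.1) * c q.2)
        = (b p.1 * b q.1) • (c p.2 * c q.2) := by
      rw [Algebra.smul_def, _root_.map_mul]
      ring
    rw [Matrix.of_apply, htrC, ← Algebra.trace_trace_of_basis (R := A) b c, hprod, _root_.map_smul,
      smul_eq_mul]
    have hTval : Algebra.trace B C (c p.2 * c q.2) = T p.2 q.2 := by
      rw [hTdef, Algebra.traceMatrix_apply, Algebra.traceForm_apply]
    rw [hTval]
    congr 1
    ring
  rw [hmain, Matrix.det_mul]
  have hΘdet : Θ.det = (Matrix.of fun i k : Fin m =>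
      LinearMap.trace A B (LinearMap.mulLeft A (b i * b k))).det ^ n := by
    rw [hS, hΘdef, Matrix.det_blockDiagonal, Finset.prod_const, Finset.card_univ,
      Fintype.card_fin]
  have hRdet : R.det = LinearMap.det (LinearMap.mulLeft A
      (Matrix.det (Matrix.of fun j l : Fin n =>
        LinearMap.trace B C (LinearMap.mulLeft B (c j * c l))))) := by
    rw [hT, hRdef, Matrix.det_reindex_self, DiscrTowerAux.det_flat_eq]
    rw [show ρ T.det = Algebra.leftMulMatrix b T.det from rfl,
      ← Algebra.norm_eq_matrix_det b, Algebra.norm_apply, DiscrTowerAux.mulLeft_eq_lmul T.det]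
  rw [hΘdet, hRdet]
end

section
/- Let k be a field and let R be a k-algebra. If M and N are simple R-modules, each finite-dimensional as a k-vector space, whose annihilators in R coincide (that is, {r ∈ R : r • m = 0 for all m ∈ M} = {r ∈ R : r • n = 0 for all n ∈ N}), then M and N are isomorphic as R-modules. -/
/-- A finite power of a simple module is semisimple. -/
lemma isSemisimpleModule_pi_of_isSimpleModule (R M : Type*) [Ring R] [AddCommGroup M]
    [Module R M] [IsSimpleModule R M] (ι : Type*) [Finite ι] :
    IsSemisimpleModule R (ι → M) := by
  classical
  refine isSemisimpleModule_of_isSemisimpleModule_submodule'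
    (p := fun i : ι => LinearMap.range (LinearMap.single R (fun _ : ι => M) i)) (fun i => ?_) ?_
  · have : IsSemisimpleModule R M := inferInstance
    exact .congr (LinearEquiv.ofInjective (LinearMap.single R (fun _ : ι => M) i)
      (Pi.single_injective (M := fun _ : ι => M) i)).symm
  · simp_rw [LinearMap.range_eq_map, Submodule.iSup_map_single, Submodule.pi_top]

/-- Two simple modules over a `k`-algebra `R`, each finite-dimensional over
`k`, with equal annihilators are isomorphic. -/
theorem linearEquiv_of_annihilator_eq (k R M N : Type*) [Field k] [Ring R] [Algebra k R]
    [AddCommGroup M] [Module k M] [Module R M] [IsScalarTower k R M] [FiniteDimensional k M]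
    [AddCommGroup N] [Module k N] [Module R N] [IsScalarTower k R N] [FiniteDimensional k N]
    [IsSimpleModule R M] [IsSimpleModule R N]
    (h : {r : R | ∀ m : M, r • m = 0} = {r : R | ∀ x : N, r • x = 0}) :
    Nonempty (M ≃ₗ[R] N) := by
  classical
  -- pick a finite k-basis of M
  set ι := Fin (Module.finrank k M)
  let b : Module.Basis ι k M := Module.finBasis k M
  -- commuting of k- and R-actions on M
  have hcomm : ∀ (r : R) (c : k) (x : M), r • (c • x) = c • (r • x) := by
    intro r c x
    rw [← algebraMap_smul R c x, ← mul_smul, ← Algebra.commutes, mul_smul, algebraMap_smul]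
  -- N is nontrivial; pick n₀ ≠ 0
  have : Nontrivial N := IsSimpleModule.nontrivial R N
  obtain ⟨n₀, hn₀⟩ := exists_ne (0 : N)
  -- the two linear maps out of R
  let ψ : R →ₗ[R] (ι → M) := LinearMap.pi fun i => LinearMap.toSpanSingleton R M (b i)
  let φ : R →ₗ[R] N := LinearMap.toSpanSingleton R N n₀
  have hφ : Function.Surjective φ := IsSimpleModule.toSpanSingleton_surjective R hn₀
  -- ker ψ ≤ ker φ
  have hker : LinearMap.ker ψ ≤ LinearMap.ker φ := by
    intro r hr
    have hr' : ∀ i, r • b i = 0 := fun i => congrFun (hr : ψ r = 0) i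
    -- r annihilates all of M
    have hM : ∀ m : M, r • m = 0 := by
      let L : M →ₗ[k] M :=
        { toFun := fun x => r • x
          map_add' := fun x y => smul_add r x y
          map_smul' := fun c x => hcomm r c x }
      have hspan : Submodule.span k (Set.range b) = ⊤ := b.span_eq
      have : (⊤ : Submodule k M) ≤ LinearMap.ker L := by
        rw [← hspan]
        refine Submodule.span_le.2 ?_
        rintro _ ⟨i, rfl⟩
        exact hr' i
      intro m
      exact this (Submodule.mem_top : m ∈ ⊤)
    have : r ∈ {r : R | ∀ x : N, r • x = 0} := h ▸ hM
    exact this n₀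
  -- factor φ through the range of ψ
  let φbar : (R ⧸ LinearMap.ker ψ) →ₗ[R] N := Submodule.liftQ _ φ hker
  let e : (R ⧸ LinearMap.ker ψ) ≃ₗ[R] LinearMap.range ψ := ψ.quotKerEquivRange
  let g : LinearMap.range ψ →ₗ[R] N := φbar.comp (e.symm : LinearMap.range ψ →ₗ[R] _)
  have hg : Function.Surjective g := by
    intro n
    obtain ⟨r, hr⟩ := hφ n
    refine ⟨e (Submodule.Quotient.mk r), ?_⟩
    simp only [g, LinearMap.comp_apply, LinearEquiv.coe_coe, LinearEquiv.symm_apply_apply]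
    simpa [φbar] using hr
  -- extend g to all of ι → M using semisimplicity
  have : IsSemisimpleModule R (ι → M) := isSemisimpleModule_pi_of_isSimpleModule R M ι
  obtain ⟨P, hP⟩ := exists_isCompl (LinearMap.range ψ)
  let F : (ι → M) →ₗ[R] N :=
    g.comp (Submodule.linearProjOfIsCompl _ P hP)
  have hF : F ≠ 0 := by
    obtain ⟨y, hy⟩ := hg n₀
    intro h0
    apply hn₀
    have : F (y : ι → M) = g y := by
      exact congrArg g (Submodule.projectionOnto_apply_left hP y)
    rw [← hy, ← this, h0]
    rfl
  -- some coordinate inclusion composed with F is nonzero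
  have : ∃ i : ι, F.comp (LinearMap.single R (fun _ : ι => M) i) ≠ 0 := by
    by_contra hc
    push_neg at hc
    apply hF
    refine LinearMap.ext fun x => ?_
    have : x = ∑ i : ι, Pi.single i (x i) := (Finset.univ_sum_single x).symm
    rw [this, map_sum]
    simp only [LinearMap.zero_apply]
    refine Finset.sum_eq_zero fun i _ => ?_
    have := congrFun (congrArg DFunLike.coe (hc i)) (x i)
    simpa using this
  obtain ⟨i, hi⟩ := this
  exact ⟨LinearEquiv.ofBijective _ (LinearMap.bijective_of_ne_zero hi)⟩
end

section
/- Let k be a field of characteristic zero, let R be a k-algebra, let M be a simple R-module that is finite-dimensional as a k-vector space, and let r ∈ R. Then r annihilates M (that is, r • m = 0 for all m ∈ M) if and only if tr_M(s·r) = 0 for every s ∈ R. -/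
open Polynomial LinearMap

section Aux

/-- From a non-nilpotent endomorphism of a finite-dimensional space, extract a nonzero
idempotent of the form `u(g) * g` (a polynomial in `g` with zero constant term). -/
lemma exists_idempotent_aeval (k V : Type*) [Field k] [AddCommGroup V] [Module k V]
    [FiniteDimensional k V] (g : Module.End k V) (hg : ¬ IsNilpotent g) :
    ∃ w : Polynomial k, IsIdempotentElem (aeval g w * g) ∧ aeval g w * g ≠ 0 := by
  have hint : IsIntegral k g := IsIntegral.of_finite k g
  set P : Polynomial k := X * minpoly k g with hP
  have hP0 : P ≠ 0 := mul_ne_zero X_ne_zero (minpoly.ne_zero hint)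
  have hPg : aeval g P = 0 := by
    rw [hP, map_mul, minpoly.aeval, mul_zero]
  set s := P.rootMultiplicity 0 with hs
  obtain ⟨q, hq, hqnd⟩ := P.exists_eq_pow_rootMultiplicity_mul_and_not_dvd hP0 0
  rw [map_zero, sub_zero] at hq hqnd
  have hcop : IsCoprime (X ^ s : Polynomial k) q :=
    ((Polynomial.irreducible_X.coprime_iff_not_dvd).mpr hqnd).pow_left
  obtain ⟨u, v, huv⟩ := hcop
  have hs1 : 1 ≤ s := by
    rw [hs]
    exact (P.rootMultiplicity_pos hP0).mpr (by simp [hP])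
  have key : aeval g (u * X ^ s) * aeval g (v * q) = 0 := by
    rw [← map_mul]
    have : u * X ^ s * (v * q) = u * v * P := by rw [hq]; ring
    rw [this, map_mul, hPg, mul_zero]
  have hsplit : aeval g (u * X ^ s) + aeval g (v * q) = 1 := by
    rw [← map_add, huv, map_one]
  have hidem : IsIdempotentElem (aeval g (u * X ^ s)) := by
    unfold IsIdempotentElem
    have := congrArg (aeval g (u * X ^ s) * ·) hsplit
    simp only [mul_add, mul_one] at this
    rw [key, add_zero] at this
    exact this
  have hne : aeval g (u * X ^ s) ≠ 0 := by
    intro h0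
    rw [h0, zero_add] at hsplit
    apply hg
    refine ⟨s, ?_⟩
    have hPs : aeval g P = g ^ s * aeval g q := by
      rw [hq, map_mul, map_pow, aeval_X]
    have : g ^ s * aeval g q = 0 := by rw [← hPs, hPg]
    have hvq : aeval g v * aeval g q = 1 := by rw [← map_mul, hsplit]
    have hcomm : aeval g q * aeval g v = 1 := by
      rw [← map_mul, mul_comm q v, map_mul, hvq]
    calc g ^ s = g ^ s * (aeval g q * aeval g v) := by rw [hcomm, mul_one]
      _ = g ^ s * aeval g q * aeval g v := by rw [mul_assoc]
      _ = 0 := by rw [this, zero_mul]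
  refine ⟨u * X ^ (s - 1), ?_, ?_⟩ <;>
  · have : aeval g (u * X ^ s) = aeval g (u * X ^ (s - 1)) * g := by
      rw [show u * X ^ s = u * X ^ (s - 1) * X by
        rw [mul_assoc, ← pow_succ, Nat.sub_add_cancel hs1], map_mul, aeval_X]
    rw [← this]
    first | exact hidem | exact hne

variable (k R M : Type*) [Field k] [Ring R] [Algebra k R]
    [AddCommGroup M] [Module k M] [Module R M] [IsScalarTower k R M]

/-- The representation of `R` on `M` as a `k`-algebra homomorphism. -/
noncomputable def repAlgHom : R →ₐ[k] Module.End k M where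
  toFun x := DistribMulAction.toLinearMap k M x
  map_one' := by ext m; simp [DistribMulAction.toLinearMap]
  map_mul' x y := by ext m; simp [DistribMulAction.toLinearMap, mul_smul]
  map_zero' := by ext m; simp [DistribMulAction.toLinearMap]
  map_add' x y := by ext m; simp [DistribMulAction.toLinearMap, add_smul]
  commutes' c := by
    ext m
    simp [DistribMulAction.toLinearMap, Module.algebraMap_end_apply, algebraMap_smul]

@[simp] lemma repAlgHom_apply (x : R) (m : M) : repAlgHom k R M x m = x • m := rfl

end Aux

lemma traceOfSMul_eq (k R M : Type*) [Field k] [Ring R] [Algebra k R]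
    [AddCommGroup M] [Module k M] [Module R M] [IsScalarTower k R M] (x : R) :
    traceOfSMul k (M := M) x = LinearMap.trace k M (repAlgHom k R M x) := rfl

/-- Let `M` be a simple module over a `k`-algebra `R`, finite-dimensional
over the characteristic-zero field `k`, and `r ∈ R`. Then `r` annihilates `M` iff
`tr_M(s·r) = 0` for every `s ∈ R`. -/
theorem annihilates_iff_trace_eq_zero (k R M : Type*) [Field k] [CharZero k] [Ring R]
    [Algebra k R]
    [AddCommGroup M] [Module k M] [Module R M] [IsScalarTower k R M] [FiniteDimensional k M]
    [IsSimpleModule R M] (r : R) :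
    (∀ m : M, r • m = 0) ↔ ∀ s : R, traceOfSMul k (M := M) (s * r) = 0 := by
  constructor
  · -- easy direction
    intro h s
    rw [traceOfSMul_eq]
    have : repAlgHom k R M (s * r) = 0 := by
      ext m; simp [mul_smul, h m]
    rw [this, map_zero]
  · intro h
    set φ := repAlgHom k R M with hφ
    -- the two-sided ideal generated by r, as a left submodule
    set J : Submodule R R := Submodule.span R {a | ∃ y, a = r * y} with hJ
    have hrJ : r ∈ J := Submodule.subset_span ⟨1, (mul_one r).symm⟩
    -- J is closed under right multiplication
    have hJr : ∀ a ∈ J, ∀ s : R, a * s ∈ J := by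
      intro a ha s
      induction ha using Submodule.span_induction with
      | mem a ha => obtain ⟨y, rfl⟩ := ha; exact Submodule.subset_span ⟨y * s, by rw [mul_assoc]⟩
      | zero => simpa using J.zero_mem
      | add a b _ _ iha ihb => rw [add_mul]; exact J.add_mem iha ihb
      | smul x a _ iha => rw [smul_eq_mul, mul_assoc, ← smul_eq_mul]; exact J.smul_mem x iha
    -- the trace of `φ (s * a)` vanishes for `a ∈ J`
    have htr : ∀ a ∈ J, ∀ s : R, LinearMap.trace k M (φ (s * a)) = 0 := by
      intro a ha
      induction ha using Submodule.span_induction with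
      | mem a ha =>
          obtain ⟨y, rfl⟩ := ha
          intro s
          rw [show s * (r * y) = (s * r) * y from (mul_assoc s r y).symm, map_mul φ,
            LinearMap.trace_mul_comm, ← map_mul φ,
            show y * (s * r) = (y * s) * r from (mul_assoc y s r).symm, ← traceOfSMul_eq]
          exact h (y * s)
      | zero => intro s; simp
      | add a b _ _ iha ihb =>
          intro s; rw [mul_add, map_add, map_add, iha s, ihb s, add_zero]
      | smul x a _ iha => intro s; rw [smul_eq_mul, ← mul_assoc]; exact iha (s * x)
    -- the common kernel of J on M
    set N : Submodule R M :=
      { carrier := {m | ∀ a ∈ J, a • m = 0}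
        add_mem' := by intro m m' hm hm' a ha; rw [smul_add, hm a ha, hm' a ha, add_zero]
        zero_mem' := by intro a ha; rw [smul_zero]
        smul_mem' := by
          intro s m hm a ha
          rw [← mul_smul]
          exact hm (a * s) (hJr a ha s) } with hN
    rcases eq_bot_or_eq_top N with hbot | htop
    swap
    · -- N = ⊤: r annihilates M
      intro m
      have : m ∈ N := htop ▸ Submodule.mem_top
      exact this r hrJ
    -- N = ⊥: derive a contradiction
    exfalso
    have : ∃ m₀ : M, ∃ a₀ ∈ J, a₀ • m₀ ≠ 0 := by
      by_contra hc
      push_neg at hc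
      have hc' : ∀ m : M, m = 0 := by
        intro m
        have hmN : m ∈ N := fun a ha => hc m a ha
        rw [hbot] at hmN
        exact (Submodule.mem_bot R).mp hmN
      have : Nontrivial M := IsSimpleModule.nontrivial R M
      obtain ⟨x, hx⟩ := exists_ne (0 : M)
      exact hx (hc' x)
    obtain ⟨m₀, a₀, ha₀J, ha₀m₀⟩ := this
    have hm₀ : m₀ ≠ 0 := fun h0 => ha₀m₀ (by rw [h0, smul_zero])
    -- the submodule J • m₀
    set P : Submodule R M :=
      { carrier := {m' | ∃ a ∈ J, a • m₀ = m'}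
        add_mem' := by
          rintro _ _ ⟨a, ha, rfl⟩ ⟨b, hb, rfl⟩
          exact ⟨a + b, J.add_mem ha hb, add_smul a b m₀⟩
        zero_mem' := ⟨0, J.zero_mem, zero_smul R m₀⟩
        smul_mem' := by
          rintro s _ ⟨a, ha, rfl⟩
          exact ⟨s * a, J.smul_mem s ha, mul_smul s a m₀⟩ } with hP
    have hPne : P ≠ ⊥ := by
      intro h0
      apply ha₀m₀
      have : a₀ • m₀ ∈ P := ⟨a₀, ha₀J, rfl⟩
      rw [h0] at this
      exact (Submodule.mem_bot R).mp this
    have hPtop : P = ⊤ := (eq_bot_or_eq_top P).resolve_left hPne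
    have hm₀P : m₀ ∈ P := hPtop ▸ Submodule.mem_top
    obtain ⟨a, haJ, ham⟩ := hm₀P
    -- powers of a fix m₀
    have hpow : ∀ n : ℕ, ((φ a) ^ n) m₀ = m₀ := by
      intro n
      induction n with
      | zero => rfl
      | succ n ih => rw [pow_succ', Module.End.mul_apply, ih]; exact ham
    have hnotnil : ¬ IsNilpotent (φ a) := by
      rintro ⟨n, hn⟩
      apply hm₀
      rw [← hpow n, hn, LinearMap.zero_apply]
    -- extract a nonzero idempotent in φ(J)
    obtain ⟨w, hwidem, hwne⟩ := exists_idempotent_aeval k M (φ a) hnotnil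
    set e : Module.End k M := aeval (φ a) w * φ a with he
    -- e = φ (aeval a w * a) and aeval a w * a ∈ J
    have heφ : e = φ ((aeval a w) * a) := by
      rw [he, map_mul φ, Polynomial.aeval_algHom_apply]
    have hbJ : (aeval a w) * a ∈ J := by
      rw [← smul_eq_mul]
      exact J.smul_mem _ haJ
    -- trace of e is zero
    have htre : LinearMap.trace k M e = 0 := by
      rw [heφ, ← one_mul ((aeval a w) * a)]
      exact htr _ hbJ 1
    -- but e is a nonzero idempotent, so its trace is its rank, nonzero in char zero
    have hproj : LinearMap.IsProj (LinearMap.range e) e := by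
      constructor
      · intro x
        exact LinearMap.mem_range_self e x
      · rintro x ⟨y, rfl⟩
        have := congrFun (congrArg DFunLike.coe hwidem) y
        simpa [he, Module.End.mul_apply] using this
    have htre' : LinearMap.trace k M e = (Module.finrank k (LinearMap.range e) : k) :=
      hproj.trace
    have hrange : Module.finrank k (LinearMap.range e) ≠ 0 := by
      intro h0
      apply hwne
      have : LinearMap.range e = ⊥ := by
        have : Subsingleton (LinearMap.range e) := by
          have := Module.finrank_zero_iff (R := k) (M := LinearMap.range e)
          exact this.mp h0
        exact Submodule.eq_bot_of_subsingleton
      exact LinearMap.range_eq_bot.mp this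
    rw [htre'] at htre
    exact hrange (Nat.cast_eq_zero.mp htre)
end
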